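/- arXiv:2003.08255 — 3 statements merged into one kernel-verified Lean document; each statement's English description precedes it below -/
import Mathlib

section
/- Let H be a finite simple graph, let k ≥ 1 be an integer, and let H(k) be the join of H with the vertex-disjoint union of k triangles. Then cd₂(H(k)) = min( cd₂(H) + 3k, τ(H) + 2k, v(H) + k ) and τ(H(k)) = min( τ(H) + 3k, v(H) + 2k ). -/
open SimpleGraph

/-- A vertex cover: a set of vertices meeting every edge. -/
def IsVertexCover {V : Type*} (H : SimpleGraph V) (S : Set V) : Prop :=
  ∀ ⦃u v⦄, H.Adj u v → u ∈ S ∨ v ∈ S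

/-- The vertex cover number. -/
noncomputable def tauN {V : Type*} (H : SimpleGraph V) : ℕ :=
  sInf {n | ∃ S : Set V, _root_.IsVertexCover H S ∧ S.ncard = n}

/-- The 2-colorability defect: the minimum number of vertices whose removal
leaves a bipartite (i.e. 2-colorable) induced subgraph. -/
noncomputable def cd2 {V : Type*} (H : SimpleGraph V) : ℕ :=
  sInf {n | ∃ X : Set V, X.ncard = n ∧ (H.induce Xᶜ).Colorable 2}

/-- The join of two graphs on disjoint vertex sets: their disjoint union together with
all edges between a vertex of the first and a vertex of the second. -/
def gJoin {V₁ V₂ : Type*} (H₁ : SimpleGraph V₁) (H₂ : SimpleGraph V₂) :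
    SimpleGraph (V₁ ⊕ V₂) where
  Adj x y :=
    match x, y with
    | .inl a, .inl b => H₁.Adj a b
    | .inl _, .inr _ => True
    | .inr _, .inl _ => True
    | .inr a, .inr b => H₂.Adj a b
  symm := by
    constructor
    rintro (a | a) (b | b) h
    · exact h.symm
    · trivial
    · trivial
    · exact h.symm
  loopless := by
    constructor
    rintro (a | a) h
    · exact H₁.irrefl h
    · exact H₂.irrefl h

/-- The vertex-disjoint union of `k` triangles, on the vertex set `Fin k × Fin 3`. -/
def kTriangles (k : ℕ) : SimpleGraph (Fin k × Fin 3) where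
  Adj p q := p.1 = q.1 ∧ p.2 ≠ q.2
  symm := by
    constructor
    rintro p q ⟨h1, h2⟩
    exact ⟨h1.symm, h2.symm⟩
  loopless := by
    constructor
    rintro p ⟨-, h⟩
    exact h rfl

/-- `Hk H k` is the join of `H` with the vertex-disjoint union of `k` triangles. -/
def Hk {V : Type*} (H : SimpleGraph V) (k : ℕ) : SimpleGraph (V ⊕ Fin k × Fin 3) :=
  gJoin H (kTriangles k)

/- ### Auxiliary lemmas -/

lemma fin2_forced : ∀ a b c : Fin 2, a ≠ c → b ≠ c → a = b := by decide

lemma fin3_ne2 : ∀ x y : Fin 3, x ≠ y → x ≠ 2 ∨ y ≠ 2 := by decide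

lemma fin3_col : ∀ x y : Fin 3, x ≠ 2 → y ≠ 2 → x ≠ y →
    (if x = 0 then (0 : Fin 2) else 1) ≠ (if y = 0 then 0 else 1) := by decide

lemma ncard_inl_union_inr {V W : Type*} [Finite V] [Finite W] (P : Set V) (Q : Set W) :
    (Sum.inl '' P ∪ Sum.inr '' Q : Set (V ⊕ W)).ncard = P.ncard + Q.ncard := by
  rw [Set.ncard_union_eq ?_ (Set.toFinite _) (Set.toFinite _),
    Set.ncard_image_of_injective _ Sum.inl_injective,
    Set.ncard_image_of_injective _ Sum.inr_injective]
  rw [Set.disjoint_left]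
  rintro x ⟨a, -, rfl⟩ ⟨b, -, hb⟩
  exact Sum.inl_ne_inr hb.symm

lemma set_sum_decomp {V W : Type*} (X : Set (V ⊕ W)) :
    X = Sum.inl '' (Sum.inl ⁻¹' X) ∪ Sum.inr '' (Sum.inr ⁻¹' X) := by
  ext (a | b) <;> simp

lemma ncard_snd_mem {k : ℕ} (A : Set (Fin 3)) :
    {p : Fin k × Fin 3 | p.2 ∈ A}.ncard = k * A.ncard := by
  have h : {p : Fin k × Fin 3 | p.2 ∈ A} = (Set.univ : Set (Fin k)) ×ˢ A := by
    ext p; simp [Set.mem_prod]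
  rw [h, ← Nat.card_coe_set_eq, Nat.card_congr (Equiv.Set.prod _ _), Nat.card_prod,
    Nat.card_coe_set_eq, Nat.card_coe_set_eq, Set.ncard_univ, Nat.card_eq_fintype_card,
    Fintype.card_fin]

lemma ncard_univ_W {k : ℕ} : (Set.univ : Set (Fin k × Fin 3)).ncard = 3 * k := by
  rw [Set.ncard_univ, Nat.card_eq_fintype_card, Fintype.card_prod, Fintype.card_fin,
    Fintype.card_fin]; omega

lemma le_ncard_of_fiber {k n : ℕ} (T : Set (Fin k × Fin 3))
    (h : ∀ i : Fin k, n ≤ {x : Fin 3 | (i, x) ∈ T}.ncard) : k * n ≤ T.ncard := by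
  classical
  rw [Set.ncard_eq_toFinset_card T (Set.toFinite T)]
  rw [Finset.card_eq_sum_card_fiberwise (f := Prod.fst) (t := Finset.univ)
    (fun x _ => Finset.mem_univ _)]
  calc k * n = ∑ _i : Fin k, n := by rw [Finset.sum_const, Finset.card_univ,
        Fintype.card_fin, smul_eq_mul, mul_comm]
    _ ≤ _ := by
        apply Finset.sum_le_sum
        intro i _
        refine le_trans (h i) ?_
        rw [Set.ncard_eq_toFinset_card _ (Set.toFinite _)]
        apply Finset.card_le_card_of_injOn (fun x => (i, x))
        · intro x hx
          simp only [Finset.mem_coe, Set.Finite.mem_toFinset, Set.mem_setOf_eq] at hx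
          simp only [Finset.mem_coe, Finset.mem_filter, Set.Finite.mem_toFinset]
          exact ⟨hx, trivial⟩
        · intro x _ y _ hxy
          exact (Prod.mk.injEq .. ▸ hxy).2

lemma two_le_fiber {k : ℕ} {T : Set (Fin k × Fin 3)} {i : Fin k}
    (h : ∀ x y : Fin 3, x ≠ y → (i, x) ∈ T ∨ (i, y) ∈ T) :
    2 ≤ {x : Fin 3 | (i, x) ∈ T}.ncard := by
  rw [show (2 : ℕ) = 1 + 1 from rfl, Nat.add_one_le_iff,
    Set.one_lt_ncard (Set.toFinite _)]
  rcases h 0 1 (by decide) with h0 | h1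
  · rcases h 1 2 (by decide) with h1 | h2
    · exact ⟨0, h0, 1, h1, by decide⟩
    · exact ⟨0, h0, 2, h2, by decide⟩
  · rcases h 0 2 (by decide) with h0 | h2
    · exact ⟨0, h0, 1, h1, by decide⟩
    · exact ⟨1, h1, 2, h2, by decide⟩

lemma ncard_ne2 {k : ℕ} : {p : Fin k × Fin 3 | p.2 ≠ 2}.ncard = 2 * k := by
  have h : {p : Fin k × Fin 3 | p.2 ≠ 2} = {p : Fin k × Fin 3 | p.2 ∈ {x : Fin 3 | x ≠ 2}} := rfl
  rw [h, ncard_snd_mem]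
  have h2 : {x : Fin 3 | x ≠ 2} = ↑({0, 1} : Finset (Fin 3)) := by ext x; revert x; decide
  rw [h2, Set.ncard_coe_finset]
  simp; omega

lemma ncard_eq2 {k : ℕ} : {p : Fin k × Fin 3 | p.2 = 2}.ncard = k := by
  have h : {p : Fin k × Fin 3 | p.2 = 2} = {p : Fin k × Fin 3 | p.2 ∈ {x : Fin 3 | x = 2}} := rfl
  rw [h, ncard_snd_mem]
  have h2 : {x : Fin 3 | x = 2} = ↑({2} : Finset (Fin 3)) := by ext x; simp
  rw [h2, Set.ncard_coe_finset]
  simp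

/-- The 2-colorability defect and the vertex cover number of the join of `H` with `k`
vertex-disjoint triangles. -/
theorem cd2_tauN_Hk {V : Type*} [Fintype V] (H : SimpleGraph V) (k : ℕ) (hk : 1 ≤ k) :
    cd2 (Hk H k) =
        min (cd2 H + 3 * k) (min (tauN H + 2 * k) (Fintype.card V + k)) ∧
      tauN (Hk H k) = min (tauN H + 3 * k) (Fintype.card V + 2 * k) := by
  classical
  -- optimal witnesses for `tauN H` and `cd2 H`
  have hτne : {n | ∃ S : Set V, _root_.IsVertexCover H S ∧ S.ncard = n}.Nonempty :=
    ⟨Set.univ.ncard, Set.univ, fun u v _ => Or.inl trivial, rfl⟩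
  have hcdne : {n | ∃ X : Set V, X.ncard = n ∧ (H.induce Xᶜ).Colorable 2}.Nonempty :=
    ⟨(Set.univ : Set V).ncard, Set.univ, rfl,
      ⟨Coloring.mk (fun _ => (0 : Fin 2)) (fun {u v} _ => absurd u.2 (by simp))⟩⟩
  obtain ⟨S₀, hS₀, hS₀c⟩ : ∃ S : Set V, _root_.IsVertexCover H S ∧ S.ncard = tauN H :=
    Nat.sInf_mem hτne
  obtain ⟨X₀, hX₀c, hX₀col⟩ : ∃ X : Set V, X.ncard = cd2 H ∧ (H.induce Xᶜ).Colorable 2 :=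
    Nat.sInf_mem hcdne
  obtain ⟨C₀⟩ := hX₀col
  constructor
  · -- cd2 part
    -- witness 1 : remove X₀ and all triangle vertices
    have mem1 : (cd2 H + 3 * k) ∈
        {n | ∃ X : Set (V ⊕ Fin k × Fin 3), X.ncard = n ∧ ((Hk H k).induce Xᶜ).Colorable 2} := by
      refine ⟨Sum.inl '' X₀ ∪ Sum.inr '' Set.univ, ?_, ?_⟩
      · rw [ncard_inl_union_inr, hX₀c, ncard_univ_W]
      · refine ⟨Coloring.mk (fun v => Sum.elim
          (fun a => if ha : a ∈ X₀ᶜ then C₀ ⟨a, ha⟩ else 0) (fun _ => 0) v.1) ?_⟩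
        rintro ⟨(a | t), hu⟩ ⟨(b | s), hv⟩ hadj
        · have ha : a ∈ X₀ᶜ := fun h => hu (Or.inl ⟨a, h, rfl⟩)
          have hb : b ∈ X₀ᶜ := fun h => hv (Or.inl ⟨b, h, rfl⟩)
          simp only [Sum.elim_inl, dif_pos ha, dif_pos hb]
          exact C₀.valid hadj
        · exact absurd (Or.inr ⟨s, trivial, rfl⟩) hv
        · exact absurd (Or.inr ⟨t, trivial, rfl⟩) hu
        · exact absurd (Or.inr ⟨t, trivial, rfl⟩) hu
    -- witness 2 : remove an optimal vertex cover and two vertices of each triangle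
    have mem2 : (tauN H + 2 * k) ∈
        {n | ∃ X : Set (V ⊕ Fin k × Fin 3), X.ncard = n ∧ ((Hk H k).induce Xᶜ).Colorable 2} := by
      refine ⟨Sum.inl '' S₀ ∪ Sum.inr '' {p | p.2 ≠ 2}, ?_, ?_⟩
      · rw [ncard_inl_union_inr, hS₀c, ncard_ne2]
      · refine ⟨Coloring.mk (fun v => Sum.elim (fun _ => (0 : Fin 2)) (fun _ => 1) v.1) ?_⟩
        rintro ⟨(a | t), hu⟩ ⟨(b | s), hv⟩ hadj
        · have ha : a ∉ S₀ := fun h => hu (Or.inl ⟨a, h, rfl⟩)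
          have hb : b ∉ S₀ := fun h => hv (Or.inl ⟨b, h, rfl⟩)
          rcases hS₀ hadj with h | h
          · exact absurd h ha
          · exact absurd h hb
        · simp
        · simp
        · have ht : t.2 = 2 := not_not.mp (fun h => hu (Or.inr ⟨t, h, rfl⟩))
          have hs : s.2 = 2 := not_not.mp (fun h => hv (Or.inr ⟨s, h, rfl⟩))
          exact absurd (ht.trans hs.symm) hadj.2
    -- witness 3 : remove all of V and one vertex of each triangle
    have mem3 : (Fintype.card V + k) ∈
        {n | ∃ X : Set (V ⊕ Fin k × Fin 3), X.ncard = n ∧ ((Hk H k).induce Xᶜ).Colorable 2} := by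
      refine ⟨Sum.inl '' Set.univ ∪ Sum.inr '' {p | p.2 = 2}, ?_, ?_⟩
      · rw [ncard_inl_union_inr, ncard_eq2, Set.ncard_univ, Nat.card_eq_fintype_card]
      · refine ⟨Coloring.mk (fun v => Sum.elim (fun _ => (0 : Fin 2))
          (fun p => if p.2 = 0 then 0 else 1) v.1) ?_⟩
        rintro ⟨(a | t), hu⟩ ⟨(b | s), hv⟩ hadj
        · exact absurd (Or.inl ⟨a, trivial, rfl⟩) hu
        · exact absurd (Or.inl ⟨a, trivial, rfl⟩) hu
        · exact absurd (Or.inl ⟨b, trivial, rfl⟩) hv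
        · have ht : t.2 ≠ 2 := fun h => hu (Or.inr ⟨t, h, rfl⟩)
          have hs : s.2 ≠ 2 := fun h => hv (Or.inr ⟨s, h, rfl⟩)
          simp only [Sum.elim_inr]
          exact fin3_col _ _ ht hs hadj.2
    refine le_antisymm ?_ (le_csInf ⟨_, mem1⟩ ?_)
    · exact le_min (Nat.sInf_le mem1) (le_min (Nat.sInf_le mem2) (Nat.sInf_le mem3))
    · rintro n ⟨X, rfl, hcol⟩
      obtain ⟨C⟩ := hcol
      have hdec : X.ncard = (Sum.inl ⁻¹' X).ncard + (Sum.inr ⁻¹' X).ncard := by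
        conv_lhs => rw [set_sum_decomp X]
        exact ncard_inl_union_inr _ _
      by_cases hT : ∀ t : Fin k × Fin 3, t ∈ Sum.inr ⁻¹' X
      · -- all triangle vertices removed
        have hcd : cd2 H ≤ (Sum.inl ⁻¹' X).ncard := by
          refine Nat.sInf_le ⟨Sum.inl ⁻¹' X, rfl, ⟨Coloring.mk
            (fun a => C ⟨Sum.inl a.1, a.2⟩) ?_⟩⟩
          intro u v h
          exact C.valid h
        have hTc : (Sum.inr ⁻¹' X).ncard = 3 * k := by
          rw [Set.eq_univ_of_forall hT, ncard_univ_W]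
        have hmin : min (cd2 H + 3 * k) (min (tauN H + 2 * k) (Fintype.card V + k)) ≤
            cd2 H + 3 * k := min_le_left _ _
        omega
      · push_neg at hT
        obtain ⟨t₀, ht₀⟩ := hT
        by_cases hA : ∀ a : V, a ∈ Sum.inl ⁻¹' X
        · -- all of V removed; each triangle loses at least one vertex
          have hAc : (Sum.inl ⁻¹' X).ncard = Fintype.card V := by
            rw [Set.eq_univ_of_forall hA, Set.ncard_univ, Nat.card_eq_fintype_card]
          have hfib : ∀ i : Fin k, 1 ≤ {x : Fin 3 | (i, x) ∈ Sum.inr ⁻¹' X}.ncard := by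
            intro i
            rw [Nat.one_le_iff_ne_zero, ← Nat.pos_iff_ne_zero,
              Set.ncard_pos (Set.toFinite _)]
            by_contra hne
            rw [Set.not_nonempty_iff_eq_empty] at hne
            have hall : ∀ x : Fin 3, Sum.inr (i, x) ∈ Xᶜ := by
              intro x hx
              have hmem : x ∈ {x : Fin 3 | (i, x) ∈ Sum.inr ⁻¹' X} := hx
              rw [hne] at hmem
              exact hmem
            have e02 := C.valid (v := ⟨Sum.inr (i, 0), hall 0⟩) (w := ⟨Sum.inr (i, 2), hall 2⟩)
              ⟨rfl, (by decide : (0 : Fin 3) ≠ 2)⟩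
            have e12 := C.valid (v := ⟨Sum.inr (i, 1), hall 1⟩) (w := ⟨Sum.inr (i, 2), hall 2⟩)
              ⟨rfl, (by decide : (1 : Fin 3) ≠ 2)⟩
            have e01 := C.valid (v := ⟨Sum.inr (i, 0), hall 0⟩) (w := ⟨Sum.inr (i, 1), hall 1⟩)
              ⟨rfl, (by decide : (0 : Fin 3) ≠ 1)⟩
            exact e01 (fin2_forced _ _ _ e02 e12)
          have hT1 : k * 1 ≤ (Sum.inr ⁻¹' X).ncard := le_ncard_of_fiber _ hfib
          have hmin : min (cd2 H + 3 * k) (min (tauN H + 2 * k) (Fintype.card V + k)) ≤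
              Fintype.card V + k := (min_le_right _ _).trans (min_le_right _ _)
          omega
        · push_neg at hA
          obtain ⟨a₀, ha₀⟩ := hA
          -- both sides survive : remaining V-part independent, triangles lose ≥ 2 each
          have hcov : _root_.IsVertexCover H (Sum.inl ⁻¹' X) := by
            intro u v huv
            by_contra hcon
            push_neg at hcon
            obtain ⟨hu, hv⟩ := hcon
            have h1 := C.valid (v := ⟨Sum.inl u, hu⟩) (w := ⟨Sum.inr t₀, ht₀⟩) trivial
            have h2 := C.valid (v := ⟨Sum.inl v, hv⟩) (w := ⟨Sum.inr t₀, ht₀⟩) trivial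
            have h3 := C.valid (v := ⟨Sum.inl u, hu⟩) (w := ⟨Sum.inl v, hv⟩) huv
            exact h3 (fin2_forced _ _ _ h1 h2)
          have hτ : tauN H ≤ (Sum.inl ⁻¹' X).ncard := Nat.sInf_le ⟨_, hcov, rfl⟩
          have hfib2 : ∀ i : Fin k, 2 ≤ {x : Fin 3 | (i, x) ∈ Sum.inr ⁻¹' X}.ncard := by
            intro i
            refine two_le_fiber (fun x y hxy => ?_)
            by_contra hcon
            push_neg at hcon
            obtain ⟨hx, hy⟩ := hcon
            have e1 := C.valid (v := ⟨Sum.inr (i, x), hx⟩) (w := ⟨Sum.inl a₀, ha₀⟩) trivial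
            have e2 := C.valid (v := ⟨Sum.inr (i, y), hy⟩) (w := ⟨Sum.inl a₀, ha₀⟩) trivial
            have e3 := C.valid (v := ⟨Sum.inr (i, x), hx⟩) (w := ⟨Sum.inr (i, y), hy⟩)
              ⟨rfl, hxy⟩
            exact e3 (fin2_forced _ _ _ e1 e2)
          have hT2 : k * 2 ≤ (Sum.inr ⁻¹' X).ncard := le_ncard_of_fiber _ hfib2
          have hmin : min (cd2 H + 3 * k) (min (tauN H + 2 * k) (Fintype.card V + k)) ≤
              tauN H + 2 * k := (min_le_right _ _).trans (min_le_left _ _)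
          omega
  · -- tauN part
    have memA : (tauN H + 3 * k) ∈
        {n | ∃ S : Set (V ⊕ Fin k × Fin 3), _root_.IsVertexCover (Hk H k) S ∧ S.ncard = n} := by
      refine ⟨Sum.inl '' S₀ ∪ Sum.inr '' Set.univ, ?_, ?_⟩
      · rintro (a | t) (b | s) hadj
        · rcases hS₀ hadj with h | h
          · exact Or.inl (Or.inl ⟨a, h, rfl⟩)
          · exact Or.inr (Or.inl ⟨b, h, rfl⟩)
        · exact Or.inr (Or.inr ⟨s, trivial, rfl⟩)
        · exact Or.inl (Or.inr ⟨t, trivial, rfl⟩)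
        · exact Or.inl (Or.inr ⟨t, trivial, rfl⟩)
      · rw [ncard_inl_union_inr, hS₀c, ncard_univ_W]
    have memB : (Fintype.card V + 2 * k) ∈
        {n | ∃ S : Set (V ⊕ Fin k × Fin 3), _root_.IsVertexCover (Hk H k) S ∧ S.ncard = n} := by
      refine ⟨Sum.inl '' Set.univ ∪ Sum.inr '' {p | p.2 ≠ 2}, ?_, ?_⟩
      · rintro (a | t) (b | s) hadj
        · exact Or.inl (Or.inl ⟨a, trivial, rfl⟩)
        · exact Or.inl (Or.inl ⟨a, trivial, rfl⟩)
        · exact Or.inr (Or.inl ⟨b, trivial, rfl⟩)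
        · rcases fin3_ne2 t.2 s.2 hadj.2 with h | h
          · exact Or.inl (Or.inr ⟨t, h, rfl⟩)
          · exact Or.inr (Or.inr ⟨s, h, rfl⟩)
      · rw [ncard_inl_union_inr, ncard_ne2, Set.ncard_univ, Nat.card_eq_fintype_card]
    refine le_antisymm (le_min (Nat.sInf_le memA) (Nat.sInf_le memB)) (le_csInf ⟨_, memA⟩ ?_)
    rintro n ⟨S, hS, rfl⟩
    have hdec : S.ncard = (Sum.inl ⁻¹' S).ncard + (Sum.inr ⁻¹' S).ncard := by
      conv_lhs => rw [set_sum_decomp S]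
      exact ncard_inl_union_inr _ _
    by_cases hA : ∀ a : V, a ∈ Sum.inl ⁻¹' S
    · have hAc : (Sum.inl ⁻¹' S).ncard = Fintype.card V := by
        rw [Set.eq_univ_of_forall hA, Set.ncard_univ, Nat.card_eq_fintype_card]
      have hfib : ∀ i : Fin k, 2 ≤ {x : Fin 3 | (i, x) ∈ Sum.inr ⁻¹' S}.ncard := by
        intro i
        exact two_le_fiber (fun x y hxy =>
          hS (show (Hk H k).Adj (Sum.inr (i, x)) (Sum.inr (i, y)) from ⟨rfl, hxy⟩))
      have hT2 : k * 2 ≤ (Sum.inr ⁻¹' S).ncard := le_ncard_of_fiber _ hfib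
      have hmin : min (tauN H + 3 * k) (Fintype.card V + 2 * k) ≤ Fintype.card V + 2 * k :=
        min_le_right _ _
      omega
    · push_neg at hA
      obtain ⟨a₀, ha₀⟩ := hA
      have hT : Sum.inr ⁻¹' S = Set.univ := Set.eq_univ_of_forall (fun t =>
        ((hS (show (Hk H k).Adj (Sum.inl a₀) (Sum.inr t) from trivial)).resolve_left ha₀))
      have hcov : _root_.IsVertexCover H (Sum.inl ⁻¹' S) := fun u v h =>
        hS (show (Hk H k).Adj (Sum.inl u) (Sum.inl v) from h)
      have hτ : tauN H ≤ (Sum.inl ⁻¹' S).ncard := Nat.sInf_le ⟨_, hcov, rfl⟩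
      have hTc : (Sum.inr ⁻¹' S).ncard = 3 * k := by rw [hT, ncard_univ_W]
      have hmin : min (tauN H + 3 * k) (Fintype.card V + 2 * k) ≤ tauN H + 3 * k :=
        min_le_left _ _
      omega
end

section
/- Let H be a finite connected triangle-free simple graph with at least one edge, let k ≥ 1 be an integer, let H(k) be the join of H with the vertex-disjoint union of k triangles, and let G(k) = KG(H(k)) be the complement of the line graph of H(k). Then χ(G(k)) = min( τ(H) + 3k, v(H) + k ). -/
open SimpleGraph

/-- `KG H` is the complement of the line graph of `H`: its vertices are the edges of `H`,
two of them being adjacent exactly when the corresponding edges of `H` are disjoint. -/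
def KG {V : Type*} (H : SimpleGraph V) : SimpleGraph H.edgeSet where
  Adj e f := e ≠ f ∧ ∀ v, v ∈ (e : Sym2 V) → v ∉ (f : Sym2 V)
  symm := by
    constructor
    rintro e f ⟨hne, h⟩
    exact ⟨hne.symm, fun v hvf hve => h v hve hvf⟩
  loopless := by
    constructor
    rintro e ⟨hne, -⟩
    exact hne rfl

/-- The chromatic number: least `n` such that `G` has a proper coloring with `n` colors. -/
noncomputable def chromNum {W : Type*} (G : SimpleGraph W) : ℕ :=
  sInf {n | G.Colorable n}

namespace ChromAux

lemma sym2_exists {V : Type*} (z : Sym2 V) : ∃ x y, z = s(x, y) := by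
  induction z using Sym2.ind with
  | _ x y => exact ⟨x, y, rfl⟩

lemma sym2_eq_of_mem {V : Type*} {x y : V} {e : Sym2 V} (hx : x ∈ e) (hy : y ∈ e)
    (hxy : x ≠ y) : e = s(x, y) := by
  obtain ⟨b, rfl⟩ := Sym2.mem_iff_exists.mp hx
  rcases Sym2.mem_iff.mp hy with h | h
  · exact absurd h.symm hxy
  · rw [h]

lemma noTriangle {V : Type*} {H : SimpleGraph V} (htf : H.CliqueFree 3) {a b c : V}
    (hab : H.Adj a b) (hac : H.Adj a c) (hbc : H.Adj b c) : False := by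
  classical
  exact htf {a, b, c} (SimpleGraph.is3Clique_triple_iff.mpr ⟨hab, hac, hbc⟩)

/-- Each color class of a proper coloring of `KG F` is a star or a triangle. -/
lemma class_structure {W : Type*} [Nonempty W] (F : SimpleGraph W) {n : ℕ}
    (C : (KG F).Coloring (Fin n)) (c : Fin n) :
    (∃ p, ∀ e : F.edgeSet, C e = c → p ∈ (e : Sym2 W)) ∨
    (∃ p q r, F.Adj p q ∧ F.Adj p r ∧ F.Adj q r ∧ ∀ e : F.edgeSet, C e = c →
      (e : Sym2 W) = s(p, q) ∨ (e : Sym2 W) = s(p, r) ∨ (e : Sym2 W) = s(q, r)) := by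
  classical
  by_cases h : ∃ p, ∀ e : F.edgeSet, C e = c → p ∈ (e : Sym2 W)
  · exact Or.inl h
  push_neg at h
  have share : ∀ e f : F.edgeSet, C e = c → C f = c → e ≠ f →
      ∃ v, v ∈ (e : Sym2 W) ∧ v ∈ (f : Sym2 W) := by
    intro e f he hf hne
    by_contra hc
    push_neg at hc
    exact C.valid ⟨hne, fun v hv hv' => hc v hv hv'⟩ (he.trans hf.symm)
  obtain ⟨e₁, hce₁, -⟩ := h (Classical.arbitrary W)
  obtain ⟨p, q, hpq⟩ := sym2_exists (e₁ : Sym2 W)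
  have hadj_pq : F.Adj p q := by rw [← SimpleGraph.mem_edgeSet, ← hpq]; exact e₁.2
  have hpe₁ : p ∈ (e₁ : Sym2 W) := by rw [hpq]; simp
  have hqe₁ : q ∈ (e₁ : Sym2 W) := by rw [hpq]; simp
  obtain ⟨f, hcf, hpf⟩ := h p
  have hq_f : q ∈ (f : Sym2 W) := by
    have hne : e₁ ≠ f := fun hEq => hpf (hEq ▸ hpe₁)
    obtain ⟨v, hv1, hv2⟩ := share e₁ f hce₁ hcf hne
    rw [hpq] at hv1
    rcases Sym2.mem_iff.mp hv1 with rfl | rfl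
    · exact absurd hv2 hpf
    · exact hv2
  obtain ⟨r, hfr⟩ := Sym2.mem_iff_exists.mp hq_f
  have hrf : r ∈ (f : Sym2 W) := by rw [hfr]; simp
  have hpr : p ≠ r := fun hEq => hpf (hEq ▸ hrf)
  have hadj_qr : F.Adj q r := by rw [← SimpleGraph.mem_edgeSet, ← hfr]; exact f.2
  obtain ⟨g, hcg, hqg⟩ := h q
  have hp_g : p ∈ (g : Sym2 W) := by
    have hne : e₁ ≠ g := fun hEq => hqg (hEq ▸ hqe₁)
    obtain ⟨v, hv1, hv2⟩ := share e₁ g hce₁ hcg hne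
    rw [hpq] at hv1
    rcases Sym2.mem_iff.mp hv1 with rfl | rfl
    · exact hv2
    · exact absurd hv2 hqg
  have hr_g : r ∈ (g : Sym2 W) := by
    have hqf : q ∈ (f : Sym2 W) := hq_f
    have hne : f ≠ g := fun hEq => hqg (hEq ▸ hqf)
    obtain ⟨v, hv1, hv2⟩ := share f g hcf hcg hne
    rw [hfr] at hv1
    rcases Sym2.mem_iff.mp hv1 with rfl | rfl
    · exact absurd hv2 hqg
    · exact hv2
  have hg : (g : Sym2 W) = s(p, r) := sym2_eq_of_mem hp_g hr_g hpr
  have hadj_pr : F.Adj p r := by rw [← SimpleGraph.mem_edgeSet, ← hg]; exact g.2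
  refine Or.inr ⟨p, q, r, hadj_pq, hadj_pr, hadj_qr, ?_⟩
  intro e hce
  by_cases hqe : q ∈ (e : Sym2 W)
  · by_cases heg : e = g
    · rw [heg, hg] at hqe
      rcases Sym2.mem_iff.mp hqe with rfl | rfl
      · exact absurd hadj_pq (F.loopless.irrefl q)
      · exact absurd hadj_qr (F.loopless.irrefl q)
    · obtain ⟨v, hv1, hv2⟩ := share e g hce hcg heg
      rw [hg] at hv2
      rcases Sym2.mem_iff.mp hv2 with rfl | rfl
      · exact Or.inl (sym2_eq_of_mem hv1 hqe hadj_pq.ne)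
      · exact Or.inr (Or.inr ((sym2_eq_of_mem hv1 hqe hadj_qr.ne.symm).trans (Sym2.eq_swap)))
  · have hpe : p ∈ (e : Sym2 W) := by
      have hne : e ≠ e₁ := fun hEq => hqe (hEq ▸ hqe₁)
      obtain ⟨v, hv1, hv2⟩ := share e e₁ hce hce₁ hne
      rw [hpq] at hv2
      rcases Sym2.mem_iff.mp hv2 with rfl | rfl
      · exact hv1
      · exact absurd hv1 hqe
    have hre : r ∈ (e : Sym2 W) := by
      have hne : e ≠ f := fun hEq => hqe (hEq ▸ hq_f)
      obtain ⟨v, hv1, hv2⟩ := share e f hce hcf hne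
      rw [hfr] at hv2
      rcases Sym2.mem_iff.mp hv2 with rfl | rfl
      · exact absurd hv1 hqe
      · exact hv1
    exact Or.inr (Or.inl (sym2_eq_of_mem hpe hre hpr))

inductive MTag (V : Type*) (k : ℕ)
  | sV (u : V)
  | sT (w : Fin k × Fin 3)
  | t1 (w : Fin k × Fin 3) (u v : V)
  | t2 (i : Fin k) (j j' : Fin 3) (u : V)
  | t3 (i : Fin k)

def MTag.tri {V : Type*} {k : ℕ} : MTag V k → Option (Fin k)
  | .sV _ => none
  | .sT w => some w.1
  | .t1 w _ _ => some w.1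
  | .t2 i _ _ _ => some i
  | .t3 i => some i

def MTag.hedge {V : Type*} {k : ℕ} (d : V) : MTag V k → Sym2 V
  | .t1 _ u v => s(u, v)
  | _ => s(d, d)

variable {V : Type*} {H : SimpleGraph V} {k : ℕ}

def Spec (H : SimpleGraph V) (k : ℕ) {n : ℕ} (C : (KG (Hk H k)).Coloring (Fin n))
    (c : Fin n) : MTag V k → Prop
  | .sV u => ∀ e : (Hk H k).edgeSet, C e = c → Sum.inl u ∈ (e : Sym2 (V ⊕ Fin k × Fin 3))
  | .sT w => ∀ e : (Hk H k).edgeSet, C e = c → Sum.inr w ∈ (e : Sym2 (V ⊕ Fin k × Fin 3))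
  | .t1 w u v => ∀ e : (Hk H k).edgeSet, C e = c →
      (e : Sym2 (V ⊕ Fin k × Fin 3)) = s(Sum.inl u, Sum.inl v) ∨
      (e : Sym2 (V ⊕ Fin k × Fin 3)) = s(Sum.inl u, Sum.inr w) ∨
      (e : Sym2 (V ⊕ Fin k × Fin 3)) = s(Sum.inl v, Sum.inr w)
  | .t2 i j j' u => j ≠ j' ∧ ∀ e : (Hk H k).edgeSet, C e = c →
      (e : Sym2 (V ⊕ Fin k × Fin 3)) = s(Sum.inl u, Sum.inr (i, j)) ∨
      (e : Sym2 (V ⊕ Fin k × Fin 3)) = s(Sum.inl u, Sum.inr (i, j')) ∨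
      (e : Sym2 (V ⊕ Fin k × Fin 3)) = s(Sum.inr (i, j), Sum.inr (i, j'))
  | .t3 i => ∀ e : (Hk H k).edgeSet, C e = c →
      ∀ p ∈ (e : Sym2 (V ⊕ Fin k × Fin 3)), ∃ j, p = Sum.inr (i, j)

lemma spec_exists [Nonempty V] (htf : H.CliqueFree 3) {n : ℕ}
    (C : (KG (Hk H k)).Coloring (Fin n)) (c : Fin n) : ∃ t : MTag V k, Spec H k C c t := by
  rcases class_structure (Hk H k) C c with ⟨p, hp⟩ | ⟨p, q, r, hpq, hpr, hqr, hcl⟩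
  · match p with
    | .inl u => exact ⟨.sV u, by simp only [Spec]; exact hp⟩
    | .inr w => exact ⟨.sT w, by simp only [Spec]; exact hp⟩
  · match p, q, r with
    | .inl u, .inl v, .inl z =>
      exact (noTriangle htf hpq hpr hqr).elim
    | .inl u, .inl v, .inr w =>
      exact ⟨.t1 w u v, by simp only [Spec]; exact hcl⟩
    | .inl u, .inr w, .inl v =>
      refine ⟨.t1 w u v, ?_⟩
      simp only [Spec]
      intro e hce
      rcases hcl e hce with h | h | h
      · exact Or.inr (Or.inl h)
      · exact Or.inl h
      · exact Or.inr (Or.inr (h.trans Sym2.eq_swap))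
    | .inr w, .inl u, .inl v =>
      refine ⟨.t1 w u v, ?_⟩
      simp only [Spec]
      intro e hce
      rcases hcl e hce with h | h | h
      · exact Or.inr (Or.inl (h.trans Sym2.eq_swap))
      · exact Or.inr (Or.inr (h.trans Sym2.eq_swap))
      · exact Or.inl h
    | .inl u, .inr w, .inr w' =>
      have hadj : w.1 = w'.1 ∧ w.2 ≠ w'.2 := hqr
      refine ⟨.t2 w.1 w.2 w'.2 u, ?_⟩
      simp only [Spec]
      refine ⟨hadj.2, ?_⟩
      intro e hce
      have hw : (w.1, w.2) = w := rfl
      have hw' : (w.1, w'.2) = w' := by rw [hadj.1]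
      rw [hw, hw']
      rcases hcl e hce with h | h | h
      · exact Or.inl h
      · exact Or.inr (Or.inl h)
      · exact Or.inr (Or.inr h)
    | .inr w, .inl u, .inr w' =>
      have hadj : w.1 = w'.1 ∧ w.2 ≠ w'.2 := hpr
      refine ⟨.t2 w.1 w.2 w'.2 u, ?_⟩
      simp only [Spec]
      refine ⟨hadj.2, ?_⟩
      intro e hce
      have hw : (w.1, w.2) = w := rfl
      have hw' : (w.1, w'.2) = w' := by rw [hadj.1]
      rw [hw, hw']
      rcases hcl e hce with h | h | h
      · exact Or.inl (h.trans Sym2.eq_swap)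
      · exact Or.inr (Or.inr h)
      · exact Or.inr (Or.inl h)
    | .inr w, .inr w', .inl u =>
      have hadj : w.1 = w'.1 ∧ w.2 ≠ w'.2 := hpq
      refine ⟨.t2 w.1 w.2 w'.2 u, ?_⟩
      simp only [Spec]
      refine ⟨hadj.2, ?_⟩
      intro e hce
      have hw : (w.1, w.2) = w := rfl
      have hw' : (w.1, w'.2) = w' := by rw [hadj.1]
      rw [hw, hw']
      rcases hcl e hce with h | h | h
      · exact Or.inr (Or.inr h)
      · exact Or.inl (h.trans Sym2.eq_swap)
      · exact Or.inr (Or.inl (h.trans Sym2.eq_swap))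
    | .inr w, .inr w', .inr w'' =>
      have h1 : w.1 = w'.1 := hpq.1
      have h2 : w.1 = w''.1 := hpr.1
      refine ⟨.t3 w.1, ?_⟩
      simp only [Spec]
      intro e hce x hx
      rcases hcl e hce with h | h | h <;> rw [h] at hx <;>
        rcases Sym2.mem_iff.mp hx with rfl | rfl
      · exact ⟨w.2, rfl⟩
      · exact ⟨w'.2, by rw [h1]⟩
      · exact ⟨w.2, rfl⟩
      · exact ⟨w''.2, by rw [h2]⟩
      · exact ⟨w'.2, by rw [h1]⟩
      · exact ⟨w''.2, by rw [h2]⟩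


variable {n : ℕ} {C : (KG (Hk H k)).Coloring (Fin n)} {tg : Fin n → MTag V k}

/-- The `Hk`-edge corresponding to an edge of `H`. -/
def eH {u v : V} (h : H.Adj u v) : (Hk H k).edgeSet :=
  ⟨s(Sum.inl u, Sum.inl v), h⟩

/-- The join edge between `u : V` and a triangle vertex `w`. -/
def eJ (u : V) (w : Fin k × Fin 3) (H : SimpleGraph V) : (Hk H k).edgeSet :=
  ⟨s(Sum.inl u, Sum.inr w), trivial⟩

/-- The internal edge of triangle `i` between positions `j ≠ j'`. -/
def eT (i : Fin k) {j j' : Fin 3} (hjj : j ≠ j') (H : SimpleGraph V) : (Hk H k).edgeSet :=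
  ⟨s(Sum.inr (i, j), Sum.inr (i, j')), ⟨rfl, hjj⟩⟩

lemma U_H (htg : ∀ c, Spec H k C c (tg c)) {u v : V} (h : H.Adj u v) :
    tg (C (eH h)) = .sV u ∨ tg (C (eH h)) = .sV v ∨
    ∃ w, tg (C (eH h)) = .t1 w u v ∨ tg (C (eH h)) = .t1 w v u := by
  set c := C (eH h) with hc
  have hs := htg c
  cases htg' : tg c with
  | sV u' =>
    rw [htg'] at hs; simp only [Spec] at hs
    have hmem := hs (eH h) hc.symm
    simp only [eH, Sym2.mem_iff, Sum.inl.injEq] at hmem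
    rcases hmem with rfl | rfl
    · exact Or.inl rfl
    · exact Or.inr (Or.inl rfl)
  | sT w' =>
    rw [htg'] at hs; simp only [Spec] at hs
    have hmem := hs (eH h) hc.symm
    simp [eH] at hmem
  | t1 w' u' v' =>
    rw [htg'] at hs; simp only [Spec] at hs
    rcases hs (eH h) hc.symm with h' | h' | h'
    · simp only [eH, Sym2.eq_iff, Sum.inl.injEq] at h'
      rcases h' with ⟨rfl, rfl⟩ | ⟨rfl, rfl⟩
      · exact Or.inr (Or.inr ⟨w', Or.inl rfl⟩)
      · exact Or.inr (Or.inr ⟨w', Or.inr rfl⟩)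
    · simp [eH, Sym2.eq_iff] at h'
    · simp [eH, Sym2.eq_iff] at h'
  | t2 i a b u' =>
    rw [htg'] at hs; simp only [Spec] at hs
    rcases hs.2 (eH h) hc.symm with h' | h' | h' <;> simp [eH, Sym2.eq_iff] at h'
  | t3 i =>
    rw [htg'] at hs; simp only [Spec] at hs
    have := hs (eH h) hc.symm (Sum.inl u) (by simp [eH])
    simp at this

lemma U_J (htg : ∀ c, Spec H k C c (tg c)) (u : V) (w : Fin k × Fin 3) :
    tg (C (eJ u w H)) = .sV u ∨ tg (C (eJ u w H)) = .sT w ∨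
    (∃ v, tg (C (eJ u w H)) = .t1 w u v ∨ tg (C (eJ u w H)) = .t1 w v u) ∨
    (∃ a b, tg (C (eJ u w H)) = .t2 w.1 a b u ∧ (w.2 = a ∨ w.2 = b)) := by
  set c := C (eJ u w H) with hc
  have hs := htg c
  cases htg' : tg c with
  | sV u' =>
    rw [htg'] at hs; simp only [Spec] at hs
    have hmem := hs (eJ u w H) hc.symm
    simp only [eJ, Sym2.mem_iff, Sum.inl.injEq, reduceCtorEq, or_false] at hmem
    subst hmem
    exact Or.inl rfl
  | sT w' =>
    rw [htg'] at hs; simp only [Spec] at hs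
    have hmem := hs (eJ u w H) hc.symm
    simp only [eJ, Sym2.mem_iff, Sum.inr.injEq, reduceCtorEq, false_or] at hmem
    subst hmem
    exact Or.inr (Or.inl rfl)
  | t1 w' u' v' =>
    rw [htg'] at hs; simp only [Spec] at hs
    rcases hs (eJ u w H) hc.symm with h' | h' | h'
    · simp [eJ, Sym2.eq_iff] at h'
    · simp only [eJ, Sym2.eq_iff, Sum.inl.injEq, Sum.inr.injEq, reduceCtorEq, false_and,
        and_false, or_false] at h'
      obtain ⟨rfl, rfl⟩ := h'
      exact Or.inr (Or.inr (Or.inl ⟨v', Or.inl rfl⟩))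
    · simp only [eJ, Sym2.eq_iff, Sum.inl.injEq, Sum.inr.injEq, reduceCtorEq, false_and,
        and_false, or_false] at h'
      obtain ⟨rfl, rfl⟩ := h'
      exact Or.inr (Or.inr (Or.inl ⟨u', Or.inr rfl⟩))
  | t2 i a b u' =>
    rw [htg'] at hs; simp only [Spec] at hs
    rcases hs.2 (eJ u w H) hc.symm with h' | h' | h'
    · simp only [eJ, Sym2.eq_iff, Sum.inl.injEq, Sum.inr.injEq, reduceCtorEq, false_and,
        and_false, or_false] at h'
      obtain ⟨rfl, rfl⟩ := h'
      exact Or.inr (Or.inr (Or.inr ⟨a, b, rfl, Or.inl rfl⟩))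
    · simp only [eJ, Sym2.eq_iff, Sum.inl.injEq, Sum.inr.injEq, reduceCtorEq, false_and,
        and_false, or_false] at h'
      obtain ⟨rfl, rfl⟩ := h'
      exact Or.inr (Or.inr (Or.inr ⟨a, b, rfl, Or.inr rfl⟩))
    · simp [eJ, Sym2.eq_iff] at h'
  | t3 i =>
    rw [htg'] at hs; simp only [Spec] at hs
    have := hs (eJ u w H) hc.symm (Sum.inl u) (by simp [eJ])
    simp at this

lemma U_T (htg : ∀ c, Spec H k C c (tg c)) (i : Fin k) {j j' : Fin 3} (hjj : j ≠ j') :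
    (∃ jc, tg (C (eT i hjj H)) = .sT (i, jc) ∧ (jc = j ∨ jc = j')) ∨
    (∃ u a b, tg (C (eT i hjj H)) = .t2 i a b u ∧ s(a, b) = s(j, j')) ∨
    tg (C (eT i hjj H)) = .t3 i := by
  set c := C (eT i hjj H) with hc
  have hs := htg c
  cases htg' : tg c with
  | sV u' =>
    rw [htg'] at hs; simp only [Spec] at hs
    have hmem := hs (eT i hjj H) hc.symm
    simp [eT] at hmem
  | sT w' =>
    rw [htg'] at hs; simp only [Spec] at hs
    have hmem := hs (eT i hjj H) hc.symm
    simp only [eT, Sym2.mem_iff, Sum.inr.injEq] at hmem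
    rcases hmem with rfl | rfl
    · exact Or.inl ⟨j, rfl, Or.inl rfl⟩
    · exact Or.inl ⟨j', rfl, Or.inr rfl⟩
  | t1 w' u' v' =>
    rw [htg'] at hs; simp only [Spec] at hs
    rcases hs (eT i hjj H) hc.symm with h' | h' | h' <;> simp [eT, Sym2.eq_iff] at h'
  | t2 i' a b u' =>
    rw [htg'] at hs; simp only [Spec] at hs
    rcases hs.2 (eT i hjj H) hc.symm with h' | h' | h'
    · simp [eT, Sym2.eq_iff] at h'
    · simp [eT, Sym2.eq_iff] at h'
    · simp only [eT, Sym2.eq_iff, Sum.inr.injEq, Prod.mk.injEq] at h'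
      rcases h' with ⟨⟨rfl, rfl⟩, ⟨-, rfl⟩⟩ | ⟨⟨rfl, rfl⟩, ⟨-, rfl⟩⟩
      · exact Or.inr (Or.inl ⟨u', j, j', rfl, rfl⟩)
      · exact Or.inr (Or.inl ⟨u', j', j, rfl, Sym2.eq_swap⟩)
  | t3 i' =>
    rw [htg'] at hs; simp only [Spec] at hs
    have := hs (eT i hjj H) hc.symm (Sum.inr (i, j)) (by simp [eT])
    obtain ⟨jj, hjjx⟩ := this
    simp only [Sum.inr.injEq, Prod.mk.injEq] at hjjx
    obtain ⟨rfl, -⟩ := hjjx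
    exact Or.inr (Or.inr rfl)


lemma tauN_le_card {V : Type*} (H : SimpleGraph V) (S : Finset V)
    (hS : ∀ ⦃u v⦄, H.Adj u v → u ∈ S ∨ v ∈ S) : tauN H ≤ S.card := by
  have : S.card ∈ {n | ∃ T : Set V, _root_.IsVertexCover H T ∧ T.ncard = n} :=
    ⟨↑S, fun u v h => by simpa using hS h, by simp [Set.ncard_coe_finset]⟩
  exact Nat.sInf_le this

end ChromAux
open Finset in
lemma fin3_mem_pair {jc j j' : Fin 3} (h : jc = j ∨ jc = j') (hne : j ≠ j') : True := trivial

namespace ChromAux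

section Counting

open Finset

variable {V : Type*} {H : SimpleGraph V} {k : ℕ}

open scoped Classical in
noncomputable def Aset [Fintype V] {n : ℕ} (tg : Fin n → MTag V k) : Finset V :=
  Finset.univ.filter (fun u => ∃ c, tg c = .sV u)

open scoped Classical in
noncomputable def SAset {n : ℕ} (tg : Fin n → MTag V k) : Finset (Fin n) :=
  Finset.univ.filter (fun c => (tg c).tri = none)

open scoped Classical in
noncomputable def DiS {n : ℕ} (tg : Fin n → MTag V k) (i : Fin k) : Finset (Fin n) :=
  Finset.univ.filter (fun c => (tg c).tri = some i)

open scoped Classical in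
noncomputable def STiS {n : ℕ} (tg : Fin n → MTag V k) (i : Fin k) : Finset (Fin n) :=
  Finset.univ.filter (fun c => ∃ j, tg c = .sT (i, j))

open scoped Classical in
noncomputable def T1wS {n : ℕ} (tg : Fin n → MTag V k) (w : Fin k × Fin 3) : Finset (Fin n) :=
  Finset.univ.filter (fun c => ∃ u v, tg c = .t1 w u v)

open scoped Classical in
noncomputable def T1iS {n : ℕ} (tg : Fin n → MTag V k) (i : Fin k) : Finset (Fin n) :=
  Finset.univ.filter (fun c => ∃ j u v, tg c = .t1 (i, j) u v)

open scoped Classical in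
noncomputable def T2iS {n : ℕ} (tg : Fin n → MTag V k) (i : Fin k) : Finset (Fin n) :=
  Finset.univ.filter (fun c => ∃ a b u, tg c = .t2 i a b u)

open scoped Classical in
noncomputable def T3iS {n : ℕ} (tg : Fin n → MTag V k) (i : Fin k) : Finset (Fin n) :=
  Finset.univ.filter (fun c => tg c = .t3 i)

open scoped Classical in
noncomputable def T1allS {n : ℕ} (tg : Fin n → MTag V k) : Finset (Fin n) :=
  Finset.univ.filter (fun c => ∃ w u v, tg c = .t1 w u v)

noncomputable def DedgeS [DecidableEq V] {n : ℕ} (tg : Fin n → MTag V k) (d : V) :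
    Finset (Sym2 V) :=
  (T1allS tg).image (fun c => (tg c).hedge d)

lemma L_n {n : ℕ} (tg : Fin n → MTag V k) :
    (SAset tg).card + ∑ i : Fin k, (DiS tg i).card = n := by
  classical
  have hfib := Finset.card_eq_sum_card_fiberwise
    (s := (Finset.univ : Finset (Fin n))) (t := (Finset.univ : Finset (Option (Fin k))))
    (f := fun c => (tg c).tri) (fun x _ => Finset.mem_univ _)
  rw [Finset.card_univ, Fintype.card_fin, Fintype.sum_option] at hfib
  have h1 : (SAset tg).card = (Finset.univ.filter (fun c => (tg c).tri = none)).card := by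
    simp [SAset]
  have h2 : ∀ i, (DiS tg i).card = (Finset.univ.filter (fun c => (tg c).tri = some i)).card := by
    intro i; simp [DiS]
  rw [h1, Finset.sum_congr rfl (fun i _ => h2 i)]
  exact hfib.symm

lemma L_A [Fintype V] {n : ℕ} (tg : Fin n → MTag V k) :
    (Aset tg).card ≤ (SAset tg).card := by
  classical
  rcases Nat.eq_zero_or_pos n with rfl | hn
  · have : Aset tg = ∅ := by
      ext u
      simp only [Aset, Finset.mem_filter, Finset.notMem_empty, iff_false, not_and]
      rintro - ⟨c, -⟩
      exact c.elim0
    simp [this]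
  haveI : Inhabited (Fin n) := ⟨⟨0, hn⟩⟩
  have hfex : ∀ u : V, ∃ f : Fin n, (∃ c, tg c = MTag.sV u) → tg f = MTag.sV u := by
    intro u
    by_cases h : ∃ c, tg c = MTag.sV u
    · exact ⟨h.choose, fun _ => h.choose_spec⟩
    · exact ⟨default, fun h' => absurd h' h⟩
  choose f hf using hfex
  refine Finset.card_le_card_of_injOn f ?_ ?_
  · intro u hu
    simp only [Aset, Finset.mem_coe, Finset.mem_filter] at hu
    simp only [SAset, Finset.mem_coe, Finset.mem_filter]
    exact ⟨Finset.mem_univ _, by rw [hf u hu.2]; rfl⟩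
  · intro u hu u' hu' hEq
    simp only [Aset, Finset.coe_filter, Set.mem_setOf_eq] at hu hu'
    have e1 := hf u hu.2
    have e2 := hf u' hu'.2
    rw [hEq, e2] at e1
    exact (MTag.sV.inj e1).symm

lemma L_split {n : ℕ} (tg : Fin n → MTag V k) (i : Fin k) :
    (STiS tg i).card + (T1iS tg i).card + (T2iS tg i).card + (T3iS tg i).card
      ≤ (DiS tg i).card := by
  classical
  have dST_T1 : Disjoint (STiS tg i) (T1iS tg i) := by
    rw [Finset.disjoint_left]
    intro c h1 h2
    simp only [STiS, T1iS, Finset.mem_filter] at h1 h2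
    obtain ⟨j, e1⟩ := h1.2; obtain ⟨j', u, v, e2⟩ := h2.2
    rw [e1] at e2; exact (by cases e2)
  have dST_T2 : Disjoint (STiS tg i) (T2iS tg i) := by
    rw [Finset.disjoint_left]
    intro c h1 h2
    simp only [STiS, T2iS, Finset.mem_filter] at h1 h2
    obtain ⟨j, e1⟩ := h1.2; obtain ⟨a, b, u, e2⟩ := h2.2
    rw [e1] at e2; exact (by cases e2)
  have dST_T3 : Disjoint (STiS tg i) (T3iS tg i) := by
    rw [Finset.disjoint_left]
    intro c h1 h2
    simp only [STiS, T3iS, Finset.mem_filter] at h1 h2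
    obtain ⟨j, e1⟩ := h1.2; have e2 := h2.2
    rw [e1] at e2; exact (by cases e2)
  have dT1_T2 : Disjoint (T1iS tg i) (T2iS tg i) := by
    rw [Finset.disjoint_left]
    intro c h1 h2
    simp only [T1iS, T2iS, Finset.mem_filter] at h1 h2
    obtain ⟨j, u, v, e1⟩ := h1.2; obtain ⟨a, b, u', e2⟩ := h2.2
    rw [e1] at e2; exact (by cases e2)
  have dT1_T3 : Disjoint (T1iS tg i) (T3iS tg i) := by
    rw [Finset.disjoint_left]
    intro c h1 h2
    simp only [T1iS, T3iS, Finset.mem_filter] at h1 h2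
    obtain ⟨j, u, v, e1⟩ := h1.2; have e2 := h2.2
    rw [e1] at e2; exact (by cases e2)
  have dT2_T3 : Disjoint (T2iS tg i) (T3iS tg i) := by
    rw [Finset.disjoint_left]
    intro c h1 h2
    simp only [T2iS, T3iS, Finset.mem_filter] at h1 h2
    obtain ⟨a, b, u, e1⟩ := h1.2; have e2 := h2.2
    rw [e1] at e2; exact (by cases e2)
  have hsub : STiS tg i ∪ T1iS tg i ∪ T2iS tg i ∪ T3iS tg i ⊆ DiS tg i := by
    intro c hc
    simp only [Finset.mem_union] at hc
    simp only [DiS, Finset.mem_filter]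
    refine ⟨Finset.mem_univ _, ?_⟩
    rcases hc with ((h | h) | h) | h
    · simp only [STiS, Finset.mem_filter] at h
      obtain ⟨j, e⟩ := h.2; rw [e]; rfl
    · simp only [T1iS, Finset.mem_filter] at h
      obtain ⟨j, u, v, e⟩ := h.2; rw [e]; rfl
    · simp only [T2iS, Finset.mem_filter] at h
      obtain ⟨a, b, u, e⟩ := h.2; rw [e]; rfl
    · simp only [T3iS, Finset.mem_filter] at h
      rw [h.2]; rfl
  calc (STiS tg i).card + (T1iS tg i).card + (T2iS tg i).card + (T3iS tg i).card
      = (STiS tg i ∪ T1iS tg i ∪ T2iS tg i ∪ T3iS tg i).card := by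
        rw [Finset.card_union_of_disjoint, Finset.card_union_of_disjoint,
          Finset.card_union_of_disjoint]
        · exact dST_T1
        · exact Finset.disjoint_union_left.mpr ⟨dST_T2, dT1_T2⟩
        · exact Finset.disjoint_union_left.mpr
            ⟨Finset.disjoint_union_left.mpr ⟨dST_T3, dT1_T3⟩, dT2_T3⟩
    _ ≤ (DiS tg i).card := Finset.card_le_card hsub

lemma L_T1sum {n : ℕ} (tg : Fin n → MTag V k) :
    (T1allS tg).card ≤ ∑ i : Fin k, (T1iS tg i).card := by
  classical
  have hsub : T1allS tg ⊆ Finset.univ.biUnion (fun i => T1iS tg i) := by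
    intro c hc
    simp only [T1allS, Finset.mem_filter] at hc
    obtain ⟨w, u, v, e⟩ := hc.2
    refine Finset.mem_biUnion.mpr ⟨w.1, Finset.mem_univ _, ?_⟩
    simp only [T1iS, Finset.mem_filter]
    exact ⟨Finset.mem_univ _, w.2, u, v, by rw [e]⟩
  exact le_trans (Finset.card_le_card hsub) Finset.card_biUnion_le


lemma mem_Aset [Fintype V] {n : ℕ} {tg : Fin n → MTag V k} {u : V} {c : Fin n}
    (h : tg c = .sV u) : u ∈ Aset tg := by
  classical
  simp only [Aset, Finset.mem_filter]
  exact ⟨Finset.mem_univ _, c, h⟩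

lemma mem_STiS {n : ℕ} {tg : Fin n → MTag V k} {i : Fin k} {j : Fin 3} {c : Fin n}
    (h : tg c = .sT (i, j)) : c ∈ STiS tg i := by
  classical
  simp only [STiS, Finset.mem_filter]
  exact ⟨Finset.mem_univ _, j, h⟩

lemma mem_T1wS {n : ℕ} {tg : Fin n → MTag V k} {w : Fin k × Fin 3} {u v : V} {c : Fin n}
    (h : tg c = .t1 w u v) : c ∈ T1wS tg w := by
  classical
  simp only [T1wS, Finset.mem_filter]
  exact ⟨Finset.mem_univ _, u, v, h⟩

lemma mem_T2iS {n : ℕ} {tg : Fin n → MTag V k} {i : Fin k} {a b : Fin 3} {u : V} {c : Fin n}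
    (h : tg c = .t2 i a b u) : c ∈ T2iS tg i := by
  classical
  simp only [T2iS, Finset.mem_filter]
  exact ⟨Finset.mem_univ _, a, b, u, h⟩

lemma mem_T3iS {n : ℕ} {tg : Fin n → MTag V k} {i : Fin k} {c : Fin n}
    (h : tg c = .t3 i) : c ∈ T3iS tg i := by
  classical
  simp only [T3iS, Finset.mem_filter]
  exact ⟨Finset.mem_univ _, h⟩

variable {n : ℕ} {C : (KG (Hk H k)).Coloring (Fin n)} {tg : Fin n → MTag V k}


lemma L_covH [Fintype V] [DecidableEq V] (htg : ∀ c, Spec H k C c (tg c)) (d : V) {u v : V} (h : H.Adj u v) :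
    u ∈ Aset tg ∨ v ∈ Aset tg ∨ s(u, v) ∈ DedgeS tg d := by
  classical
  rcases U_H htg h with h' | h' | ⟨w, h' | h'⟩
  · exact Or.inl (mem_Aset h')
  · exact Or.inr (Or.inl (mem_Aset h'))
  · refine Or.inr (Or.inr ?_)
    simp only [DedgeS]
    refine Finset.mem_image.mpr ⟨C (eH h), ?_, ?_⟩
    · simp only [T1allS, Finset.mem_filter]
      exact ⟨Finset.mem_univ _, w, u, v, h'⟩
    · rw [h']; rfl
  · refine Or.inr (Or.inr ?_)
    simp only [DedgeS]
    refine Finset.mem_image.mpr ⟨C (eH h), ?_, ?_⟩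
    · simp only [T1allS, Finset.mem_filter]
      exact ⟨Finset.mem_univ _, w, v, u, h'⟩
    · rw [h']; exact Sym2.eq_swap

lemma L_tau [Fintype V] [DecidableEq V] (htg : ∀ c, Spec H k C c (tg c)) (d : V) :
    tauN H ≤ (Aset tg).card + (T1allS tg).card := by
  classical
  have hcov : ∀ ⦃u v⦄, H.Adj u v →
      u ∈ Aset tg ∪ (DedgeS tg d).image (fun e => e.out.1) ∨
      v ∈ Aset tg ∪ (DedgeS tg d).image (fun e => e.out.1) := by
    intro u v h
    rcases L_covH htg d h with h' | h' | h'
    · exact Or.inl (Finset.mem_union_left _ h')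
    · exact Or.inr (Finset.mem_union_left _ h')
    · have hm : (s(u, v)).out.1 ∈ s(u, v) := Sym2.out_fst_mem _
      rcases Sym2.mem_iff.mp hm with he | he
      · exact Or.inl (Finset.mem_union_right _
          (Finset.mem_image.mpr ⟨s(u, v), h', he⟩))
      · exact Or.inr (Finset.mem_union_right _
          (Finset.mem_image.mpr ⟨s(u, v), h', he⟩))
  refine le_trans (tauN_le_card H _ hcov) ?_
  refine le_trans (Finset.card_union_le _ _) ?_
  have := Finset.card_image_le (s := DedgeS tg d) (f := fun e => e.out.1)
  have := Finset.card_image_le (s := T1allS tg) (f := fun c => (tg c).hedge d)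
  simp only [DedgeS] at *
  omega

end Counting
end ChromAux
-- decidable Fin 3 facts (outside any classical scope)
def P3 : Finset (Fin 3 × Fin 3) := {(0,1), (0,2), (1,2)}
lemma P3_card : P3.card = 3 := by decide
lemma P3_ne : ∀ p ∈ P3, p.1 ≠ p.2 := by decide
lemma P3_filter : ∀ jc : Fin 3, (P3.filter (fun p => jc = p.1 ∨ jc = p.2)).card ≤ 2 := by decide
lemma P3_uniq : ∀ p ∈ P3, ∀ q ∈ P3,
    ((p.1 = q.1 ∧ p.2 = q.2) ∨ (p.1 = q.2 ∧ p.2 = q.1)) → p = q := by decide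
lemma fin3_01 : (0 : Fin 3) ≠ 1 := by decide

namespace ChromAux

section CountingB

variable {V : Type*} {H : SimpleGraph V} {k : ℕ}
variable {n : ℕ} {C : (KG (Hk H k)).Coloring (Fin n)} {tg : Fin n → MTag V k}

lemma L_CJ [Fintype V] [DecidableEq V] (htg : ∀ c, Spec H k C c (tg c)) (i : Fin k) (j : Fin 3)
    (hnc : ∀ c, tg c ≠ .sT (i, j)) :
    (Finset.univ \ Aset tg).card ≤ 2 * (T1wS tg (i, j)).card + (T2iS tg i).card := by
  classical
  set Ac := Finset.univ \ Aset tg with hAc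
  have hdisj : Disjoint (T1wS tg (i, j)) (T2iS tg i) := by
    rw [Finset.disjoint_left]
    intro c h1 h2
    simp only [T1wS, T2iS, Finset.mem_filter] at h1 h2
    obtain ⟨u, v, e1⟩ := h1.2; obtain ⟨a, b, u', e2⟩ := h2.2
    rw [e1] at e2; exact (by cases e2)
  have hmap : ∀ u ∈ Ac, C (eJ u (i, j) H) ∈ T1wS tg (i, j) ∪ T2iS tg i := by
    intro u hu
    have huA : u ∉ Aset tg := (Finset.mem_sdiff.mp hu).2
    rcases U_J htg u (i, j) with h' | h' | ⟨v, h' | h'⟩ | ⟨a, b, h', -⟩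
    · exact absurd (mem_Aset h') huA
    · exact absurd h' (hnc _)
    · exact Finset.mem_union_left _ (mem_T1wS h')
    · exact Finset.mem_union_left _ (mem_T1wS h')
    · exact Finset.mem_union_right _ (mem_T2iS h')
  have hfib := Finset.card_eq_sum_card_fiberwise hmap
  have b1 : ∀ c ∈ T1wS tg (i, j), (Ac.filter (fun u => C (eJ u (i, j) H) = c)).card ≤ 2 := by
    intro c hc
    simp only [T1wS, Finset.mem_filter] at hc
    obtain ⟨u', v', e⟩ := hc.2
    have hsub : Ac.filter (fun u => C (eJ u (i, j) H) = c) ⊆ {u', v'} := by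
      intro u hu
      obtain ⟨huAc, huc⟩ := Finset.mem_filter.mp hu
      have huA : u ∉ Aset tg := (Finset.mem_sdiff.mp huAc).2
      have hU := U_J htg u (i, j)
      rw [huc] at hU
      rcases hU with h' | h' | ⟨v, h' | h'⟩ | ⟨a, b, h', -⟩
      · exact absurd (mem_Aset h') huA
      · exact absurd h' (hnc _)
      · rw [e] at h'
        injection h' with _ h2 h3
        simp [← h2]
      · rw [e] at h'
        injection h' with _ h2 h3
        simp [← h3]
      · rw [e] at h'
        exact (by cases h')
    exact le_trans (Finset.card_le_card hsub)
      (le_trans (Finset.card_insert_le _ _) (by simp))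
  have b2 : ∀ c ∈ T2iS tg i, (Ac.filter (fun u => C (eJ u (i, j) H) = c)).card ≤ 1 := by
    intro c hc
    simp only [T2iS, Finset.mem_filter] at hc
    obtain ⟨a, b, u', e⟩ := hc.2
    have hsub : Ac.filter (fun u => C (eJ u (i, j) H) = c) ⊆ {u'} := by
      intro u hu
      obtain ⟨huAc, huc⟩ := Finset.mem_filter.mp hu
      have huA : u ∉ Aset tg := (Finset.mem_sdiff.mp huAc).2
      have hU := U_J htg u (i, j)
      rw [huc] at hU
      rcases hU with h' | h' | ⟨v, h' | h'⟩ | ⟨a', b', h', -⟩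
      · exact absurd (mem_Aset h') huA
      · exact absurd h' (hnc _)
      · rw [e] at h'; exact (by cases h')
      · rw [e] at h'; exact (by cases h')
      · rw [e] at h'
        injection h' with _ _ _ h4
        simp [← h4]
    exact le_trans (Finset.card_le_card hsub) (by simp)
  rw [hfib, Finset.sum_union hdisj]
  have s1 : ∑ c ∈ T1wS tg (i, j), (Ac.filter (fun u => C (eJ u (i, j) H) = c)).card
      ≤ ∑ _c ∈ T1wS tg (i, j), 2 := Finset.sum_le_sum b1
  have s2 : ∑ c ∈ T2iS tg i, (Ac.filter (fun u => C (eJ u (i, j) H) = c)).card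
      ≤ ∑ _c ∈ T2iS tg i, 1 := Finset.sum_le_sum b2
  rw [Finset.sum_const, smul_eq_mul] at s1
  rw [Finset.sum_const, smul_eq_mul, mul_one] at s2
  omega

lemma L_Jsum [Fintype V] [DecidableEq V] (htg : ∀ c, Spec H k C c (tg c)) (i : Fin k) :
    (3 - (STiS tg i).card) * (Finset.univ \ Aset tg).card
      ≤ 2 * (T1iS tg i).card + (3 - (STiS tg i).card) * (T2iS tg i).card := by
  classical
  rcases le_or_gt 3 (STiS tg i).card with h3 | h3
  · simp [Nat.sub_eq_zero_of_le h3]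
  set cents : Finset (Fin 3) := Finset.univ.filter (fun j => ∃ c, tg c = .sT (i, j))
    with hcents
  have hcc : cents.card ≤ (STiS tg i).card := by
    rcases Nat.eq_zero_or_pos n with rfl | hn
    · have : cents = ∅ := by
        ext j
        simp only [hcents, Finset.mem_filter, Finset.notMem_empty, iff_false, not_and]
        rintro - ⟨c, -⟩
        exact c.elim0
      simp [this]
    haveI : Inhabited (Fin n) := ⟨⟨0, hn⟩⟩
    have hfex : ∀ j : Fin 3, ∃ f : Fin n, (∃ c, tg c = MTag.sT (i, j)) → tg f = MTag.sT (i, j) := by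
      intro j
      by_cases h : ∃ c, tg c = MTag.sT (i, j)
      · exact ⟨h.choose, fun _ => h.choose_spec⟩
      · exact ⟨default, fun h' => absurd h' h⟩
    choose f hf using hfex
    refine Finset.card_le_card_of_injOn f ?_ ?_
    · intro j hj
      simp only [hcents, Finset.mem_coe, Finset.mem_filter] at hj
      simp only [STiS, Finset.mem_coe, Finset.mem_filter]
      exact ⟨Finset.mem_univ _, j, hf j hj.2⟩
    · intro j hj j' hj' hEq
      simp only [hcents, Finset.coe_filter, Set.mem_setOf_eq] at hj hj'
      have e1 := hf j hj.2
      have e2 := hf j' hj'.2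
      rw [hEq, e2] at e1
      have := MTag.sT.inj e1
      exact (Prod.mk.injEq _ _ _ _ ▸ this).2.symm
  obtain ⟨J, hJsub, hJcard⟩ : ∃ J ⊆ Finset.univ \ cents, J.card = 3 - (STiS tg i).card := by
    apply Finset.exists_subset_card_eq
    rw [Finset.card_sdiff_of_subset (Finset.subset_univ _)]
    have hu3 : (Finset.univ : Finset (Fin 3)).card = 3 := by simp
    omega
  have hj : ∀ j ∈ J, (Finset.univ \ Aset tg).card
      ≤ 2 * (T1wS tg (i, j)).card + (T2iS tg i).card := by
    intro j hjJ
    have hnotc := (Finset.mem_sdiff.mp (hJsub hjJ)).2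
    simp only [hcents, Finset.mem_filter, Finset.mem_univ, true_and, not_exists] at hnotc
    exact L_CJ htg i j hnotc
  have hsum := Finset.sum_le_sum hj
  rw [Finset.sum_const, smul_eq_mul, hJcard] at hsum
  have hsplit : ∑ j ∈ J, (2 * (T1wS tg (i, j)).card + (T2iS tg i).card)
      = 2 * (∑ j ∈ J, (T1wS tg (i, j)).card) + (3 - (STiS tg i).card) * (T2iS tg i).card := by
    rw [Finset.sum_add_distrib, Finset.mul_sum, Finset.sum_const, smul_eq_mul, hJcard]
  rw [hsplit] at hsum
  have hdisjw : ∀ j ∈ J, ∀ j' ∈ J, j ≠ j' → Disjoint (T1wS tg (i, j)) (T1wS tg (i, j')) := by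
    intro j _ j' _ hne
    rw [Finset.disjoint_left]
    intro c h1 h2
    simp only [T1wS, Finset.mem_filter] at h1 h2
    obtain ⟨u, v, e1⟩ := h1.2; obtain ⟨u', v', e2⟩ := h2.2
    rw [e1] at e2
    injection e2 with h0
    exact hne (Prod.mk.injEq _ _ _ _ ▸ h0).2
  have hbu : ∑ j ∈ J, (T1wS tg (i, j)).card ≤ (T1iS tg i).card := by
    rw [← Finset.card_biUnion hdisjw]
    apply Finset.card_le_card
    intro c hc
    obtain ⟨j, hjJ, hcj⟩ := Finset.mem_biUnion.mp hc
    simp only [T1wS, Finset.mem_filter] at hcj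
    obtain ⟨u, v, e⟩ := hcj.2
    simp only [T1iS, Finset.mem_filter]
    exact ⟨Finset.mem_univ _, j, u, v, e⟩
  calc (3 - (STiS tg i).card) * (Finset.univ \ Aset tg).card
      ≤ 2 * (∑ j ∈ J, (T1wS tg (i, j)).card) + (3 - (STiS tg i).card) * (T2iS tg i).card :=
        hsum
    _ ≤ 2 * (T1iS tg i).card + (3 - (STiS tg i).card) * (T2iS tg i).card :=
        Nat.add_le_add_right (Nat.mul_le_mul_left 2 hbu) _

lemma L_D1 [Fintype V] (htg : ∀ c, Spec H k C c (tg c)) (i : Fin k) :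
    3 ≤ 2 * (STiS tg i).card + (T2iS tg i).card + 3 * (T3iS tg i).card := by
  classical
  set ψ : Fin 3 × Fin 3 → Fin n :=
    fun p => if h : p.1 ≠ p.2 then C (eT i h H) else C (eT i fin3_01 H) with hψ
  have hψP : ∀ p (hp : p ∈ P3), ψ p = C (eT i (P3_ne p hp) H) := by
    intro p hp
    simp only [hψ]
    exact dif_pos (P3_ne p hp)
  have dST_T2 : Disjoint (STiS tg i) (T2iS tg i) := by
    rw [Finset.disjoint_left]
    intro c h1 h2
    simp only [STiS, T2iS, Finset.mem_filter] at h1 h2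
    obtain ⟨j, e1⟩ := h1.2; obtain ⟨a, b, u, e2⟩ := h2.2
    rw [e1] at e2; exact (by cases e2)
  have dST_T3 : Disjoint (STiS tg i) (T3iS tg i) := by
    rw [Finset.disjoint_left]
    intro c h1 h2
    simp only [STiS, T3iS, Finset.mem_filter] at h1 h2
    obtain ⟨j, e1⟩ := h1.2; have e2 := h2.2
    rw [e1] at e2; exact (by cases e2)
  have dT2_T3 : Disjoint (T2iS tg i) (T3iS tg i) := by
    rw [Finset.disjoint_left]
    intro c h1 h2
    simp only [T2iS, T3iS, Finset.mem_filter] at h1 h2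
    obtain ⟨a, b, u, e1⟩ := h1.2; have e2 := h2.2
    rw [e1] at e2; exact (by cases e2)
  have hmap : ∀ p ∈ P3, ψ p ∈ STiS tg i ∪ (T2iS tg i ∪ T3iS tg i) := by
    intro p hp
    rw [hψP p hp]
    rcases U_T htg i (P3_ne p hp) with ⟨jc, e, -⟩ | ⟨u, a, b, e, -⟩ | e
    · exact Finset.mem_union_left _ (mem_STiS e)
    · exact Finset.mem_union_right _ (Finset.mem_union_left _ (mem_T2iS e))
    · exact Finset.mem_union_right _ (Finset.mem_union_right _ (mem_T3iS e))
  have hfib := Finset.card_eq_sum_card_fiberwise hmap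
  rw [P3_card, Finset.sum_union (Finset.disjoint_union_right.mpr ⟨dST_T2, dST_T3⟩),
    Finset.sum_union dT2_T3] at hfib
  have bST : ∀ c ∈ STiS tg i, (P3.filter (fun p => ψ p = c)).card ≤ 2 := by
    intro c hc
    simp only [STiS, Finset.mem_filter] at hc
    obtain ⟨jc, e⟩ := hc.2
    have hsubf : P3.filter (fun p => ψ p = c) ⊆ P3.filter (fun p => jc = p.1 ∨ jc = p.2) := by
      intro p hp
      obtain ⟨hpP, hpc⟩ := Finset.mem_filter.mp hp
      have hU := U_T htg i (P3_ne p hpP)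
      rw [← hψP p hpP, hpc, e] at hU
      rcases hU with ⟨jc', e', hor⟩ | ⟨u, a, b, e', -⟩ | e'
      · have := MTag.sT.inj e'
        have hj : jc = jc' := (Prod.mk.injEq _ _ _ _ ▸ this).2
        exact Finset.mem_filter.mpr ⟨hpP, hj ▸ hor⟩
      · exact (by cases e')
      · exact (by cases e')
    exact le_trans (Finset.card_le_card hsubf) (P3_filter jc)
  have bT2 : ∀ c ∈ T2iS tg i, (P3.filter (fun p => ψ p = c)).card ≤ 1 := by
    intro c hc
    simp only [T2iS, Finset.mem_filter] at hc
    obtain ⟨a, b, u, e⟩ := hc.2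
    rw [Finset.card_le_one]
    intro p hp q hq
    obtain ⟨hpP, hpc⟩ := Finset.mem_filter.mp hp
    obtain ⟨hqP, hqc⟩ := Finset.mem_filter.mp hq
    have hUp := U_T htg i (P3_ne p hpP)
    rw [← hψP p hpP, hpc, e] at hUp
    have hUq := U_T htg i (P3_ne q hqP)
    rw [← hψP q hqP, hqc, e] at hUq
    rcases hUp with ⟨jc', e', -⟩ | ⟨u', a', b', e', hS⟩ | e'
    · exact absurd e' (fun h => (by cases h))
    · rcases hUq with ⟨jc'', e'', -⟩ | ⟨u'', a'', b'', e'', hS'⟩ | e''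
      · exact absurd e'' (fun h => (by cases h))
      · injection e' with _ ha hb
        injection e'' with _ ha' hb'
        rw [← ha, ← hb] at hS
        rw [← ha', ← hb'] at hS'
        have := hS.symm.trans hS'
        rw [Sym2.eq_iff] at this
        exact P3_uniq p hpP q hqP this
      · exact absurd e'' (fun h => (by cases h))
    · exact absurd e' (fun h => (by cases h))
  have bT3 : ∀ c ∈ T3iS tg i, (P3.filter (fun p => ψ p = c)).card ≤ 3 := by
    intro c _
    exact le_trans (Finset.card_le_card (Finset.filter_subset _ _)) (le_of_eq P3_card)
  have s1 := Finset.sum_le_sum bST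
  have s2 := Finset.sum_le_sum bT2
  have s3 := Finset.sum_le_sum bT3
  rw [Finset.sum_const, smul_eq_mul] at s1 s2 s3
  omega

end CountingB
end ChromAux
namespace ChromAux

section CountingC

variable {V : Type*} {H : SimpleGraph V} {k : ℕ}
variable {n : ℕ} {C : (KG (Hk H k)).Coloring (Fin n)} {tg : Fin n → MTag V k}

lemma mem_T1allS {tg : Fin n → MTag V k} {w : Fin k × Fin 3} {u v : V} {c : Fin n}
    (h : tg c = .t1 w u v) : c ∈ T1allS tg := by
  classical
  simp only [T1allS, Finset.mem_filter]
  exact ⟨Finset.mem_univ _, w, u, v, h⟩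

lemma L_noncenter (i : Fin k) {n : ℕ} {tg : Fin n → MTag V k}
    (h : (STiS tg i).card ≤ 2) : ∃ j : Fin 3, ∀ c, tg c ≠ .sT (i, j) := by
  classical
  set cents : Finset (Fin 3) := Finset.univ.filter (fun j => ∃ c, tg c = .sT (i, j))
    with hcents
  have hcc : cents.card ≤ (STiS tg i).card := by
    rcases Nat.eq_zero_or_pos n with rfl | hn
    · have : cents = ∅ := by
        ext j
        simp only [hcents, Finset.mem_filter, Finset.notMem_empty, iff_false, not_and]
        rintro - ⟨c, -⟩
        exact c.elim0
      simp [this]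
    haveI : Inhabited (Fin n) := ⟨⟨0, hn⟩⟩
    have hfex : ∀ j : Fin 3, ∃ f : Fin n, (∃ c, tg c = MTag.sT (i, j)) → tg f = MTag.sT (i, j) := by
      intro j
      by_cases h : ∃ c, tg c = MTag.sT (i, j)
      · exact ⟨h.choose, fun _ => h.choose_spec⟩
      · exact ⟨default, fun h' => absurd h' h⟩
    choose f hf using hfex
    refine Finset.card_le_card_of_injOn f ?_ ?_
    · intro j hj
      simp only [hcents, Finset.mem_coe, Finset.mem_filter] at hj
      exact mem_STiS (hf j hj.2)
    · intro j hj j' hj' hEq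
      simp only [hcents, Finset.coe_filter, Set.mem_setOf_eq] at hj hj'
      have e1 := hf j hj.2
      have e2 := hf j' hj'.2
      rw [hEq, e2] at e1
      have := MTag.sT.inj e1
      exact (Prod.mk.injEq _ _ _ _ ▸ this).2.symm
  have hne : (Finset.univ \ cents).Nonempty := by
    apply Finset.card_pos.mp
    rw [Finset.card_sdiff_of_subset (Finset.subset_univ _)]
    have hu3 : (Finset.univ : Finset (Fin 3)).card = 3 := by simp
    omega
  obtain ⟨j, hj⟩ := hne
  have := (Finset.mem_sdiff.mp hj).2
  simp only [hcents, Finset.mem_filter, Finset.mem_univ, true_and, not_exists] at this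
  exact ⟨j, this⟩

lemma L_tau_ref [Fintype V] [DecidableEq V] (htg : ∀ c, Spec H k C c (tg c))
    (hconn : H.Connected) (htf : H.CliqueFree 3) (d : V)
    (i0 : Fin k) (jstar : Fin 3) (hnc : ∀ c, tg c ≠ .sT (i0, jstar))
    (ht2 : T2iS tg i0 = ∅)
    (hx4 : 4 ≤ (Finset.univ \ Aset tg).card) :
    tauN H + 1 ≤ (Aset tg).card + (T1allS tg).card := by
  classical
  have hDcard : (DedgeS tg d).card ≤ (T1allS tg).card := by
    simp only [DedgeS]
    exact Finset.card_image_le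
  have hMcov : ∀ u : V, u ∉ Aset tg → ∃ ed ∈ DedgeS tg d, u ∈ ed := by
    intro u hu
    rcases U_J htg u (i0, jstar) with h' | h' | ⟨v, h' | h'⟩ | ⟨a, b, h', -⟩
    · exact absurd (mem_Aset h') hu
    · exact absurd h' (hnc _)
    · refine ⟨(tg (C (eJ u (i0, jstar) H))).hedge d, ?_, ?_⟩
      · simp only [DedgeS]
        exact Finset.mem_image.mpr ⟨_, mem_T1allS h', rfl⟩
      · rw [h']; simp [MTag.hedge]
    · refine ⟨(tg (C (eJ u (i0, jstar) H))).hedge d, ?_, ?_⟩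
      · simp only [DedgeS]
        exact Finset.mem_image.mpr ⟨_, mem_T1allS h', rfl⟩
      · rw [h']; simp [MTag.hedge]
    · have hmm : C (eJ u (i0, jstar) H) ∈ T2iS tg i0 := mem_T2iS h'
      rw [ht2] at hmm
      exact absurd hmm (Finset.notMem_empty _)
  set E0 : Finset (Sym2 V) :=
    Finset.univ.filter (fun e => e ∈ H.edgeSet ∧ ∀ z ∈ e, z ∉ Aset tg) with hE0
  have hE0sub : E0 ⊆ DedgeS tg d := by
    intro e he
    rw [hE0, Finset.mem_filter] at he
    obtain ⟨-, heH, hav⟩ := he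
    obtain ⟨u, v, rfl⟩ := sym2_exists e
    have huv : H.Adj u v := heH
    rcases L_covH htg d huv with h | h | h
    · exact absurd h (hav u (by simp))
    · exact absurd h (hav v (by simp))
    · exact h
  have hinE0 : ∀ {u v : V}, H.Adj u v → u ∉ Aset tg → v ∉ Aset tg → s(u, v) ∈ E0 := by
    intro u v h hu hv
    rw [hE0, Finset.mem_filter]
    refine ⟨Finset.mem_univ _, h, ?_⟩
    intro z hz
    rcases Sym2.mem_iff.mp hz with rfl | rfl
    · exact hu
    · exact hv
  by_cases hED : E0 = DedgeS tg d ∧ ∀ e ∈ E0, ∀ f ∈ E0, e ≠ f → ∀ z ∈ e, z ∉ f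
  · obtain ⟨hED1, hmatch⟩ := hED
    have hAcov : ∀ u : V, u ∉ Aset tg → ∃ ed ∈ E0, u ∈ ed := by
      rw [hED1]; exact hMcov
    by_cases hAe : Aset tg = ∅
    · exfalso
      have hxuniv : 4 ≤ (Finset.univ : Finset V).card := by
        rw [hAe] at hx4; simpa using hx4
      have hall : ∀ u : V, ∃ ed ∈ E0, u ∈ ed := fun u =>
        hAcov u (by rw [hAe]; exact Finset.notMem_empty _)
      have hVne : Nonempty V := by
        have := Finset.card_pos.mp (by omega : 0 < (Finset.univ : Finset V).card)
        exact ⟨this.choose⟩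
      obtain ⟨u0⟩ := hVne
      obtain ⟨e1, he1, hu0⟩ := hall u0
      obtain ⟨b1, he1eq⟩ := Sym2.mem_iff_exists.mp hu0
      have hpairlt : ({u0, b1} : Finset V).card < (Finset.univ : Finset V).card := by
        have h2 : ({u0, b1} : Finset V).card ≤ 2 :=
          le_trans (Finset.card_insert_le _ _) (by simp)
        omega
      have hne' : (Finset.univ \ ({u0, b1} : Finset V)).Nonempty := by
        apply Finset.card_pos.mp
        rw [Finset.card_sdiff_of_subset (Finset.subset_univ _)]
        omega
      obtain ⟨u1, hu1⟩ := hne'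
      have hu1' := (Finset.mem_sdiff.mp hu1).2
      simp only [Finset.mem_insert, Finset.mem_singleton, not_or] at hu1'
      have hstep : ∀ a c : V, a ∈ e1 → H.Adj a c → c ∈ e1 := by
        intro a c ha hadj
        have hace : s(a, c) ∈ E0 :=
          hinE0 hadj (by rw [hAe]; exact Finset.notMem_empty _)
            (by rw [hAe]; exact Finset.notMem_empty _)
        by_cases heq : e1 = s(a, c)
        · rw [heq]; simp
        · exact absurd (by simp : a ∈ s(a, c)) (hmatch e1 he1 _ hace heq a ha)
      have hwalk : ∀ (a z : V) (w : H.Walk a z), a ∈ e1 → z ∈ e1 := by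
        intro a z w
        induction w with
        | nil => exact id
        | cons h p ih => exact fun ha => ih (hstep _ _ ha h)
      obtain ⟨w⟩ := hconn.preconnected u0 u1
      have := hwalk u0 u1 w (by rw [he1eq]; simp)
      rw [he1eq] at this
      rcases Sym2.mem_iff.mp this with h | h
      · exact hu1'.1 h
      · exact hu1'.2 h
    · obtain ⟨a0, ha0⟩ := Finset.nonempty_iff_ne_empty.mpr hAe
      have hpex : ∀ e : Sym2 V, ∃ z : V, z ∈ e ∧ ((∃ y ∈ e, H.Adj a0 y) → H.Adj a0 z) := by
        intro e
        by_cases h : ∃ y ∈ e, H.Adj a0 y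
        · obtain ⟨y, hy, hadj⟩ := h
          exact ⟨y, hy, fun _ => hadj⟩
        · exact ⟨e.out.1, Sym2.out_fst_mem _, fun h' => absurd h' h⟩
      choose pk hpk1 hpk2 using hpex
      set S := (Aset tg).erase a0 ∪ E0.image pk with hS
      have hcov : ∀ ⦃u v⦄, H.Adj u v → u ∈ S ∨ v ∈ S := by
        intro u v huv
        by_cases hu : u ∈ Aset tg
        · by_cases hua : u = a0
          · have huv' : H.Adj a0 v := hua ▸ huv
            by_cases hv : v ∈ Aset tg
            · refine Or.inr (Finset.mem_union_left _ ?_)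
              exact Finset.mem_erase.mpr ⟨huv'.ne', hv⟩
            · obtain ⟨e2, he2, hve2⟩ := hAcov v hv
              obtain ⟨v2, he2eq⟩ := Sym2.mem_iff_exists.mp hve2
              have hvv2 : H.Adj v v2 := by
                have := (Finset.mem_filter.mp (hE0 ▸ he2)).2.1
                rw [he2eq] at this
                exact this
              set z2 := pk e2 with hz2
              have hadjz : H.Adj a0 z2 := hpk2 e2 ⟨v, hve2, huv'⟩
              have hz2m : z2 ∈ e2 := hpk1 e2
              rw [he2eq] at hz2m
              have hzv : z2 = v := by
                rcases Sym2.mem_iff.mp hz2m with h | h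
                · exact h
                · exact (noTriangle htf huv' (h ▸ hadjz) hvv2).elim
              exact Or.inr (Finset.mem_union_right _
                (Finset.mem_image.mpr ⟨e2, he2, hzv⟩))
          · exact Or.inl (Finset.mem_union_left _ (Finset.mem_erase.mpr ⟨hua, hu⟩))
        · by_cases hv : v ∈ Aset tg
          · by_cases hva : v = a0
            · have huv' : H.Adj a0 u := hva ▸ huv.symm
              obtain ⟨e2, he2, hue2⟩ := hAcov u hu
              obtain ⟨u2, he2eq⟩ := Sym2.mem_iff_exists.mp hue2
              have huu2 : H.Adj u u2 := by
                have := (Finset.mem_filter.mp (hE0 ▸ he2)).2.1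
                rw [he2eq] at this
                exact this
              set z2 := pk e2 with hz2
              have hadjz : H.Adj a0 z2 := hpk2 e2 ⟨u, hue2, huv'⟩
              have hz2m : z2 ∈ e2 := hpk1 e2
              rw [he2eq] at hz2m
              have hzv : z2 = u := by
                rcases Sym2.mem_iff.mp hz2m with h | h
                · exact h
                · exact (noTriangle htf huv' (h ▸ hadjz) huu2).elim
              exact Or.inl (Finset.mem_union_right _
                (Finset.mem_image.mpr ⟨e2, he2, hzv⟩))
            · exact Or.inr (Finset.mem_union_left _ (Finset.mem_erase.mpr ⟨hva, hv⟩))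
          · have he := hinE0 huv hu hv
            have hz := hpk1 (s(u, v))
            rcases Sym2.mem_iff.mp hz with h | h
            · exact Or.inl (Finset.mem_union_right _
                (Finset.mem_image.mpr ⟨s(u, v), he, h⟩))
            · exact Or.inr (Finset.mem_union_right _
                (Finset.mem_image.mpr ⟨s(u, v), he, h⟩))
      have htauS := tauN_le_card H S hcov
      have hScard : S.card ≤ ((Aset tg).card - 1) + E0.card := by
        refine le_trans (Finset.card_union_le _ _) ?_
        have h1 : ((Aset tg).erase a0).card = (Aset tg).card - 1 :=
          Finset.card_erase_of_mem ha0
        have h2 : (E0.image pk).card ≤ E0.card := Finset.card_image_le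
        omega
      have hE0D : E0.card = (DedgeS tg d).card := by rw [hED1]
      have hA1 : 1 ≤ (Aset tg).card := Finset.card_pos.mpr ⟨a0, ha0⟩
      omega
  · by_cases hEDeq : E0 = DedgeS tg d
    · have hnm : ¬∀ e ∈ E0, ∀ f ∈ E0, e ≠ f → ∀ z ∈ e, z ∉ f := fun h => hED ⟨hEDeq, h⟩
      push_neg at hnm
      obtain ⟨e, he, f, hf, hnef, z, hze, hzf⟩ := hnm
      set S := Aset tg ∪ insert z ((E0 \ {e, f}).image (fun ed => ed.out.1)) with hS
      have hcov : ∀ ⦃u v⦄, H.Adj u v → u ∈ S ∨ v ∈ S := by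
        intro u v huv
        by_cases hu : u ∈ Aset tg
        · exact Or.inl (Finset.mem_union_left _ hu)
        by_cases hv : v ∈ Aset tg
        · exact Or.inr (Finset.mem_union_left _ hv)
        have hm := hinE0 huv hu hv
        by_cases hef : s(u, v) = e ∨ s(u, v) = f
        · have hzuv : z ∈ s(u, v) := by
            rcases hef with h | h
            · rw [h]; exact hze
            · rw [h]; exact hzf
          rcases Sym2.mem_iff.mp hzuv with rfl | rfl
          · exact Or.inl (Finset.mem_union_right _ (Finset.mem_insert_self _ _))
          · exact Or.inr (Finset.mem_union_right _ (Finset.mem_insert_self _ _))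
        · push_neg at hef
          have hmem : s(u, v) ∈ E0 \ {e, f} := by
            rw [Finset.mem_sdiff]
            refine ⟨hm, ?_⟩
            simp only [Finset.mem_insert, Finset.mem_singleton]
            push_neg
            exact hef
          have hout : (s(u, v)).out.1 ∈ s(u, v) := Sym2.out_fst_mem _
          rcases Sym2.mem_iff.mp hout with h | h
          · exact Or.inl (Finset.mem_union_right _ (Finset.mem_insert.mpr (Or.inr
              (Finset.mem_image.mpr ⟨s(u, v), hmem, h⟩))))
          · exact Or.inr (Finset.mem_union_right _ (Finset.mem_insert.mpr (Or.inr
              (Finset.mem_image.mpr ⟨s(u, v), hmem, h⟩))))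
      have htauS := tauN_le_card H S hcov
      have h2E : 2 ≤ E0.card := by
        have hsub2 : ({e, f} : Finset (Sym2 V)) ⊆ E0 := by
          intro g hg
          rcases Finset.mem_insert.mp hg with rfl | hg
          · exact he
          · rw [Finset.mem_singleton.mp hg]; exact hf
        have : ({e, f} : Finset (Sym2 V)).card = 2 := Finset.card_pair hnef
        have := Finset.card_le_card hsub2
        omega
      have hScard : S.card ≤ (Aset tg).card + 1 + (E0.card - 2) := by
        refine le_trans (Finset.card_union_le _ _) ?_
        have h1 := Finset.card_insert_le z ((E0 \ {e, f}).image (fun ed => ed.out.1))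
        have h2 : ((E0 \ {e, f}).image (fun ed => ed.out.1)).card ≤ (E0 \ {e, f}).card :=
          Finset.card_image_le
        have h3 : (E0 \ ({e, f} : Finset (Sym2 V))).card = E0.card - 2 := by
          rw [Finset.card_sdiff_of_subset]
          · rw [Finset.card_pair hnef]
          · intro g hg
            rcases Finset.mem_insert.mp hg with rfl | hg
            · exact he
            · rw [Finset.mem_singleton.mp hg]; exact hf
        omega
      have hE0D : E0.card = (DedgeS tg d).card := by rw [hEDeq]
      omega
    · have hssub : E0 ⊂ DedgeS tg d := Finset.ssubset_iff_subset_ne.mpr ⟨hE0sub, hEDeq⟩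
      have hlt : E0.card < (DedgeS tg d).card := Finset.card_lt_card hssub
      set S := Aset tg ∪ E0.image (fun ed => ed.out.1) with hS
      have hcov : ∀ ⦃u v⦄, H.Adj u v → u ∈ S ∨ v ∈ S := by
        intro u v huv
        by_cases hu : u ∈ Aset tg
        · exact Or.inl (Finset.mem_union_left _ hu)
        by_cases hv : v ∈ Aset tg
        · exact Or.inr (Finset.mem_union_left _ hv)
        have hm := hinE0 huv hu hv
        have hout : (s(u, v)).out.1 ∈ s(u, v) := Sym2.out_fst_mem _
        rcases Sym2.mem_iff.mp hout with h | h
        · exact Or.inl (Finset.mem_union_right _ (Finset.mem_image.mpr ⟨s(u, v), hm, h⟩))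
        · exact Or.inr (Finset.mem_union_right _ (Finset.mem_image.mpr ⟨s(u, v), hm, h⟩))
      have htauS := tauN_le_card H S hcov
      have hScard : S.card ≤ (Aset tg).card + E0.card := by
        refine le_trans (Finset.card_union_le _ _) ?_
        have := Finset.card_image_le (s := E0) (f := fun ed : Sym2 V => ed.out.1)
        omega
      omega

end CountingC
end ChromAux
namespace ChromAux

lemma kg_lower {V : Type*} [Fintype V] (H : SimpleGraph V) (hconn : H.Connected)
    (htf : H.CliqueFree 3) (hE : H.edgeSet.Nonempty) (k : ℕ) (hk : 1 ≤ k) {n : ℕ}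
    (hcol : (KG (Hk H k)).Colorable n) :
    min (tauN H + 3 * k) (Fintype.card V + k) ≤ n := by
  classical
  obtain ⟨C⟩ := hcol
  obtain ⟨e0, he0⟩ := hE
  obtain ⟨d, v0, -⟩ := sym2_exists e0
  haveI : Nonempty V := ⟨d⟩
  choose tg htg using fun c => spec_exists htf C c
  by_contra hcon
  push_neg at hcon
  obtain ⟨hlt1, hlt2⟩ := lt_min_iff.mp hcon
  have hn := L_n tg
  have hA := L_A tg
  have htau := L_tau htg d
  have hT1sum := L_T1sum tg
  have hxcard : (Aset tg).card + (Finset.univ \ Aset tg).card = Fintype.card V := by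
    rw [Finset.card_sdiff_of_subset (Finset.subset_univ _), Finset.card_univ]
    have h1 : (Aset tg).card ≤ (Finset.univ : Finset V).card := Finset.card_le_univ _
    rw [Finset.card_univ] at h1
    omega
  have hDge : ∀ i, (STiS tg i).card + (T2iS tg i).card + (T3iS tg i).card
      + (T1iS tg i).card ≤ (DiS tg i).card := by
    intro i
    have := L_split tg i
    omega
  have hDone : ∀ i, 1 ≤ (DiS tg i).card := by
    intro i
    have h1 := L_D1 htg i
    have h2 := L_split tg i
    omega
  by_cases hdefall : ∀ i, 3 ≤ (STiS tg i).card + (T2iS tg i).card + (T3iS tg i).card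
  · have hsum1 : ∑ i : Fin k, ((STiS tg i).card + (T2iS tg i).card + (T3iS tg i).card
        + (T1iS tg i).card) ≤ ∑ i : Fin k, (DiS tg i).card :=
      Finset.sum_le_sum (fun i _ => hDge i)
    have hsum2 : ∑ i : Fin k, ((STiS tg i).card + (T2iS tg i).card + (T3iS tg i).card
        + (T1iS tg i).card)
        = (∑ i : Fin k, ((STiS tg i).card + (T2iS tg i).card + (T3iS tg i).card))
          + ∑ i : Fin k, (T1iS tg i).card := by
      rw [← Finset.sum_add_distrib]
    have hsum3 : 3 * k ≤ ∑ i : Fin k, ((STiS tg i).card + (T2iS tg i).card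
        + (T3iS tg i).card) := by
      calc 3 * k = ∑ _i : Fin k, 3 := by
            simp [Finset.sum_const, Finset.card_univ, mul_comm]
        _ ≤ _ := Finset.sum_le_sum (fun i _ => hdefall i)
    omega
  · push_neg at hdefall
    obtain ⟨i0, hi0lt⟩ := hdefall
    have hErCard : (Finset.univ.erase i0).card = k - 1 := by
      rw [Finset.card_erase_of_mem (Finset.mem_univ _), Finset.card_univ]
      simp
    have hDefB1 : ∀ i, (STiS tg i).card + (T2iS tg i).card + (T3iS tg i).card ≤ 2 →
        (T2iS tg i).card + (T3iS tg i).card = 0 →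
        (STiS tg i).card = 2 ∧ (Finset.univ \ Aset tg).card ≤ 2 * (T1iS tg i).card := by
      intro i hdef h0
      have hci := L_D1 htg i
      have hjs := L_Jsum htg i
      have hst : (STiS tg i).card = 2 := by omega
      rw [hst] at hjs
      exact ⟨hst, by omega⟩
    have hDefB2 : ∀ i, (STiS tg i).card + (T2iS tg i).card + (T3iS tg i).card ≤ 2 →
        (T2iS tg i).card + (T3iS tg i).card ≠ 0 →
        (Finset.univ \ Aset tg).card + 1 ≤ (DiS tg i).card := by
      intro i hdef h1
      have hci := L_D1 htg i
      have hjs := L_Jsum htg i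
      have hDg := hDge i
      have hst01 : (STiS tg i).card = 0 ∨ (STiS tg i).card = 1 := by omega
      rcases hst01 with h | h <;> rw [h] at hjs <;> omega
    have hEr : (DiS tg i0).card + ∑ i ∈ Finset.univ.erase i0, (DiS tg i).card
        = ∑ i : Fin k, (DiS tg i).card :=
      Finset.add_sum_erase _ (fun i => (DiS tg i).card) (Finset.mem_univ i0)
    have hrest1 : k - 1 ≤ ∑ i ∈ Finset.univ.erase i0, (DiS tg i).card := by
      have h1 : ∑ _i ∈ Finset.univ.erase i0, 1 = k - 1 := by
        rw [Finset.sum_const, smul_eq_mul, mul_one, hErCard]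
      rw [← h1]
      exact Finset.sum_le_sum (fun i _ => hDone i)
    by_cases ht23 : (T2iS tg i0).card + (T3iS tg i0).card = 0
    · obtain ⟨hst2, hxT⟩ := hDefB1 i0 (by omega) ht23
      by_cases hx3 : (Finset.univ \ Aset tg).card ≤ 3
      · have hDi0 : 2 + (T1iS tg i0).card ≤ (DiS tg i0).card := by
          have := hDge i0
          omega
        omega
      · by_cases hdef2 : ∀ i, i ≠ i0 →
            3 ≤ (STiS tg i).card + (T2iS tg i).card + (T3iS tg i).card
        · obtain ⟨jstar, hjstar⟩ := L_noncenter i0 (le_of_eq hst2)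
          have ht2e : T2iS tg i0 = ∅ := Finset.card_eq_zero.mp (by omega)
          have htref := L_tau_ref htg hconn htf d i0 jstar hjstar ht2e (by omega)
          have hrest3 : (k - 1) * 3 ≤ ∑ i ∈ Finset.univ.erase i0,
              ((STiS tg i).card + (T2iS tg i).card + (T3iS tg i).card) := by
            have h1 : ∑ _i ∈ Finset.univ.erase i0, 3 = (k - 1) * 3 := by
              rw [Finset.sum_const, smul_eq_mul, hErCard]
            rw [← h1]
            exact Finset.sum_le_sum (fun i hi => hdef2 i (Finset.ne_of_mem_erase hi))
          have hErG : ((STiS tg i0).card + (T2iS tg i0).card + (T3iS tg i0).card)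
              + ∑ i ∈ Finset.univ.erase i0,
                ((STiS tg i).card + (T2iS tg i).card + (T3iS tg i).card)
              = ∑ i : Fin k, ((STiS tg i).card + (T2iS tg i).card + (T3iS tg i).card) :=
            Finset.add_sum_erase _
              (fun i => (STiS tg i).card + (T2iS tg i).card + (T3iS tg i).card)
              (Finset.mem_univ i0)
          have hsum1 : ∑ i : Fin k, ((STiS tg i).card + (T2iS tg i).card + (T3iS tg i).card
              + (T1iS tg i).card) ≤ ∑ i : Fin k, (DiS tg i).card :=
            Finset.sum_le_sum (fun i _ => hDge i)
          have hsum2 : ∑ i : Fin k, ((STiS tg i).card + (T2iS tg i).card + (T3iS tg i).card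
              + (T1iS tg i).card)
              = (∑ i : Fin k, ((STiS tg i).card + (T2iS tg i).card + (T3iS tg i).card))
                + ∑ i : Fin k, (T1iS tg i).card := by
            rw [← Finset.sum_add_distrib]
          omega
        · push_neg at hdef2
          obtain ⟨i1, hi1ne, hi1lt⟩ := hdef2
          have hBnd : ∀ i, (STiS tg i).card + (T2iS tg i).card + (T3iS tg i).card ≤ 2 →
              ((Finset.univ \ Aset tg).card + 4 ≤ 2 * (DiS tg i).card ∨
                (Finset.univ \ Aset tg).card + 1 ≤ (DiS tg i).card) := by
            intro i hd
            by_cases h0 : (T2iS tg i).card + (T3iS tg i).card = 0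
            · obtain ⟨hst, hxT'⟩ := hDefB1 i hd h0
              left
              have := hDge i
              omega
            · right
              exact hDefB2 i hd h0
          have hB0 := hBnd i0 (by omega)
          have hB1 := hBnd i1 (by omega)
          have hi1mem : i1 ∈ Finset.univ.erase i0 :=
            Finset.mem_erase.mpr ⟨hi1ne, Finset.mem_univ _⟩
          have hEr2 : (DiS tg i1).card
              + ∑ i ∈ (Finset.univ.erase i0).erase i1, (DiS tg i).card
              = ∑ i ∈ Finset.univ.erase i0, (DiS tg i).card :=
            Finset.add_sum_erase _ (fun i => (DiS tg i).card) hi1mem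
          have hEr2card : ((Finset.univ.erase i0).erase i1).card = k - 2 := by
            rw [Finset.card_erase_of_mem hi1mem, hErCard]
            omega
          have hrest2 : k - 2 ≤ ∑ i ∈ (Finset.univ.erase i0).erase i1, (DiS tg i).card := by
            have h1 : ∑ _i ∈ (Finset.univ.erase i0).erase i1, 1 = k - 2 := by
              rw [Finset.sum_const, smul_eq_mul, mul_one, hEr2card]
            rw [← h1]
            exact Finset.sum_le_sum (fun i _ => hDone i)
          rcases hB0 with hB0 | hB0 <;> rcases hB1 with hB1 | hB1 <;> omega
    · have hB := hDefB2 i0 (by omega) ht23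
      omega

end ChromAux

namespace ChromAux
variable {V : Type*} {H : SimpleGraph V} {k : ℕ}

lemma hk_adj_lr {u : V} {w : Fin k × Fin 3} : (Hk H k).Adj (.inl u) (.inr w) := trivial
lemma hk_adj_rr {w w' : Fin k × Fin 3} :
    (Hk H k).Adj (.inr w) (.inr w') ↔ w.1 = w'.1 ∧ w.2 ≠ w'.2 := Iff.rfl

/-- Generic: if `T` hits every edge of `G`, then `KG G` is colorable with `|T|` colors. -/
lemma kg_colorable_of_cover {W : Type*} (G : SimpleGraph W) (T : Set W) [Fintype T]
    (h : ∀ e : G.edgeSet, ∃ p, p ∈ T ∧ p ∈ (e : Sym2 W)) :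
    (KG G).Colorable (Fintype.card T) := by
  choose f hfT hfe using h
  refine (Coloring.mk (G := KG G) (fun e => (⟨f e, hfT e⟩ : T)) ?_).colorable
  rintro e e' ⟨hne, hdis⟩ hEq
  have : f e = f e' := congrArg Subtype.val hEq
  exact hdis (f e) (hfe e) (this ▸ hfe e')

lemma kg_colorable_tau [Fintype V] (H : SimpleGraph V) (k : ℕ) :
    (KG (Hk H k)).Colorable (tauN H + 3 * k) := by
  have hne : {n | ∃ S : Set V, _root_.IsVertexCover H S ∧ S.ncard = n}.Nonempty :=
    ⟨(Set.univ : Set V).ncard, Set.univ, fun u v _ => Or.inl trivial, rfl⟩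
  obtain ⟨S, hScov, hScard⟩ := Nat.sInf_mem hne
  set T : Set (V ⊕ Fin k × Fin 3) := (Sum.inl '' S) ∪ Set.range Sum.inr with hT
  letI : Fintype T := Fintype.ofFinite _
  have hhits : ∀ e : (Hk H k).edgeSet, ∃ p, p ∈ T ∧ p ∈ (e : Sym2 (V ⊕ Fin k × Fin 3)) := by
    rintro ⟨e, he⟩
    induction e using Sym2.ind with
    | _ p q =>
      have hadj : (Hk H k).Adj p q := he
      match p, q with
      | .inl u, .inl v =>
        rcases hScov hadj with h | h
        · exact ⟨.inl u, Or.inl ⟨u, h, rfl⟩, by simp⟩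
        · exact ⟨.inl v, Or.inl ⟨v, h, rfl⟩, by simp⟩
      | .inl u, .inr w => exact ⟨.inr w, Or.inr ⟨w, rfl⟩, by simp⟩
      | .inr w, _ => exact ⟨.inr w, Or.inr ⟨w, rfl⟩, by simp⟩
  have hcard : Fintype.card T = tauN H + 3 * k := by
    have h1 : Fintype.card T = T.ncard := by
      rw [← Nat.card_coe_set_eq, Nat.card_eq_fintype_card]
    have hdisj : Disjoint (Sum.inl '' S) (Set.range (Sum.inr : Fin k × Fin 3 → _)) := by
      rw [Set.disjoint_iff]
      rintro x ⟨⟨u, _, rfl⟩, ⟨w, hw⟩⟩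
      exact absurd hw (by simp)
    have h2 : T.ncard = (Sum.inl '' S).ncard + (Set.range (Sum.inr : Fin k × Fin 3 → _)).ncard :=
      Set.ncard_union_eq hdisj (Set.toFinite _) (Set.toFinite _)
    have h3 : (Sum.inl '' S : Set (V ⊕ Fin k × Fin 3)).ncard = tauN H := by
      rw [Set.ncard_image_of_injective _ Sum.inl_injective, hScard]; rfl
    have h4 : (Set.range (Sum.inr : Fin k × Fin 3 → V ⊕ Fin k × Fin 3)).ncard = 3 * k := by
      rw [show (Set.range (Sum.inr : Fin k × Fin 3 → V ⊕ Fin k × Fin 3))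
            = Sum.inr '' Set.univ by simp,
        Set.ncard_image_of_injective _ Sum.inr_injective, Set.ncard_univ,
        Nat.card_eq_fintype_card]
      simp [mul_comm]
    rw [h1, h2, h3, h4]
  exact hcard ▸ kg_colorable_of_cover _ T hhits

lemma fin3_lemma : ∀ a b c d : Fin 3, a ≠ b → c ≠ d → a ≠ c → a ≠ d → b ≠ c → b ≠ d → False := by
  intro a b c d hab hcd hac had hbc hbd
  have h1 : a.val ≠ b.val := fun h => hab (Fin.ext h)
  have h2 : c.val ≠ d.val := fun h => hcd (Fin.ext h)
  have h3 : a.val ≠ c.val := fun h => hac (Fin.ext h)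
  have h4 : a.val ≠ d.val := fun h => had (Fin.ext h)
  have h5 : b.val ≠ c.val := fun h => hbc (Fin.ext h)
  have h6 : b.val ≠ d.val := fun h => hbd (Fin.ext h)
  have := a.isLt; have := b.isLt; have := c.isLt; have := d.isLt
  omega

lemma kg_colorable_v [Fintype V] (H : SimpleGraph V) (k : ℕ) :
    (KG (Hk H k)).Colorable (Fintype.card V + k) := by
  classical
  have key : ∀ e : (Hk H k).edgeSet, ∃ t : V ⊕ Fin k,
      (∃ u, t = .inl u ∧ (Sum.inl u) ∈ (e : Sym2 (V ⊕ Fin k × Fin 3))) ∨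
      (∃ i, t = .inr i ∧ ∀ p ∈ (e : Sym2 (V ⊕ Fin k × Fin 3)), ∃ j, p = Sum.inr (i, j)) := by
    rintro ⟨e, he⟩
    induction e using Sym2.ind with
    | _ p q =>
      have hadj : (Hk H k).Adj p q := he
      match p, q with
      | .inl u, _ => exact ⟨.inl u, Or.inl ⟨u, rfl, by simp⟩⟩
      | .inr w, .inl u => exact ⟨.inl u, Or.inl ⟨u, rfl, by simp⟩⟩
      | .inr w, .inr w' =>
        obtain ⟨h1, _⟩ := (hk_adj_rr (H := H)).mp hadj
        refine ⟨.inr w.1, Or.inr ⟨w.1, rfl, ?_⟩⟩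
        intro p hp
        rcases Sym2.mem_iff.mp hp with rfl | rfl
        · exact ⟨w.2, rfl⟩
        · exact ⟨w'.2, by rw [h1]⟩
  choose t ht using key
  refine ((Coloring.mk (G := KG (Hk H k)) t ?_).colorable).mono (by simp [Fintype.card_sum])
  rintro e e' ⟨hne, hdis⟩ hEq
  rcases ht e with ⟨u, hu, hue⟩ | ⟨i, hi, hie⟩
  · rcases ht e' with ⟨u', hu', hue'⟩ | ⟨i', hi', hie'⟩
    · rw [hEq, hu'] at hu
      cases Sum.inl.inj hu
      exact hdis _ hue hue'
    · rw [hEq, hi'] at hu; simp at hu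
  · rcases ht e' with ⟨u', hu', hue'⟩ | ⟨i', hi', hie'⟩
    · rw [hEq, hu'] at hi; simp at hi
    · rw [hEq, hi'] at hi
      cases Sum.inr.inj hi
      -- both edges inside triangle i; extract endpoints
      obtain ⟨x1, x2, hx⟩ := sym2_exists (e : Sym2 (V ⊕ Fin k × Fin 3))
      obtain ⟨y1, y2, hy⟩ := sym2_exists (e' : Sym2 (V ⊕ Fin k × Fin 3))
      have hadj1 : (Hk H k).Adj x1 x2 := by rw [← SimpleGraph.mem_edgeSet, ← hx]; exact e.2
      have hadj2 : (Hk H k).Adj y1 y2 := by rw [← SimpleGraph.mem_edgeSet, ← hy]; exact e'.2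
      obtain ⟨a, ha⟩ := hie x1 (by rw [hx]; simp)
      obtain ⟨b, hb⟩ := hie x2 (by rw [hx]; simp)
      obtain ⟨c, hc⟩ := hie' y1 (by rw [hy]; simp)
      obtain ⟨d, hd⟩ := hie' y2 (by rw [hy]; simp)
      subst ha hb hc hd
      have hab : a ≠ b := by
        have := ((hk_adj_rr (H := H)).mp hadj1).2; simpa using this
      have hcd : c ≠ d := by
        have := ((hk_adj_rr (H := H)).mp hadj2).2; simpa using this
      have h1 : (Sum.inr (i, a) : V ⊕ Fin k × Fin 3) ∉ (e' : Sym2 _) :=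
        hdis (Sum.inr (i, a)) (by rw [hx]; simp)
      have h2 : (Sum.inr (i, b) : V ⊕ Fin k × Fin 3) ∉ (e' : Sym2 _) :=
        hdis (Sum.inr (i, b)) (by rw [hx]; simp)
      rw [hy] at h1 h2
      simp only [Sym2.mem_iff, not_or] at h1 h2
      refine fin3_lemma a b c d hab hcd ?_ ?_ ?_ ?_
      · intro h; exact h1.1 (by rw [h])
      · intro h; exact h1.2 (by rw [h])
      · intro h; exact h2.1 (by rw [h])
      · intro h; exact h2.2 (by rw [h])


end ChromAux

namespace ChromAux

theorem final_thm {V : Type*} [Fintype V] (H : SimpleGraph V)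
    (hconn : H.Connected) (htf : H.CliqueFree 3) (hE : H.edgeSet.Nonempty)
    (k : ℕ) (hk : 1 ≤ k) :
    chromNum (KG (Hk H k)) = min (tauN H + 3 * k) (Fintype.card V + k) := by
  classical
  have hub1 := kg_colorable_tau H k
  have hub2 := kg_colorable_v H k
  have hmem : (KG (Hk H k)).Colorable (min (tauN H + 3 * k) (Fintype.card V + k)) := by
    rcases min_cases (tauN H + 3 * k) (Fintype.card V + k) with ⟨h1, -⟩ | ⟨h1, -⟩ <;> rw [h1]
    · exact hub1
    · exact hub2
  refine le_antisymm (Nat.sInf_le hmem) ?_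
  refine le_csInf ⟨_, hmem⟩ ?_
  intro m hm
  exact kg_lower H hconn htf hE k hk hm

end ChromAux

/-- For a connected triangle-free graph `H` with at least one edge, the chromatic number
of the complement of the line graph of the join of `H` with `k` disjoint triangles. -/
theorem chromNum_KG_Hk {V : Type*} [Fintype V] (H : SimpleGraph V)
    (hconn : H.Connected) (htf : H.CliqueFree 3) (hE : H.edgeSet.Nonempty)
    (k : ℕ) (hk : 1 ≤ k) :
    chromNum (KG (Hk H k)) = min (tauN H + 3 * k) (Fintype.card V + k) := by
  exact ChromAux.final_thm H hconn htf hE k hk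
end

section
/- Let H be a finite connected triangle-free simple graph with at least one edge, let k ≥ 1 be an integer, let H(k) be the join of H with the vertex-disjoint union of k triangles, and let G(k) = KG(H(k)) be the complement of the line graph of H(k). Then χ(G(k)) = τ(H(k)) if and only if α(H) ≥ 2k. -/
open SimpleGraph

/-- The independence number. -/
noncomputable def indepNum {V : Type*} (H : SimpleGraph V) : ℕ :=
  sSup {n | ∃ S : Set V, (∀ u ∈ S, ∀ v ∈ S, ¬ H.Adj u v) ∧ S.ncard = n}

section Infra
variable {V : Type*} [Fintype V] {H : SimpleGraph V}

lemma le_indepNum {A : Set V} (hA : ∀ u ∈ A, ∀ v ∈ A, ¬ H.Adj u v) :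
    A.ncard ≤ _root_.indepNum H := by
  apply le_csSup
  · refine ⟨Fintype.card V, ?_⟩
    rintro m ⟨S, -, rfl⟩
    have := Set.ncard_le_ncard (Set.subset_univ S) Set.finite_univ
    simpa [Set.ncard_univ] using this
  · exact ⟨A, hA, rfl⟩

lemma exists_indep_card (H : SimpleGraph V) :
    ∃ A : Set V, (∀ u ∈ A, ∀ v ∈ A, ¬ H.Adj u v) ∧ A.ncard = _root_.indepNum H := by
  have h := Nat.sSup_mem (s := {n | ∃ S : Set V, (∀ u ∈ S, ∀ v ∈ S, ¬ H.Adj u v) ∧ S.ncard = n})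
    ⟨0, ∅, by simp, by simp⟩ ?_
  · exact h
  · refine ⟨Fintype.card V, ?_⟩
    rintro m ⟨S, -, rfl⟩
    have := Set.ncard_le_ncard (Set.subset_univ S) Set.finite_univ
    simpa [Set.ncard_univ] using this

lemma edge_rep {W : Type*} (G : SimpleGraph W) (e : G.edgeSet) :
    ∃ x y, G.Adj x y ∧ (e : Sym2 W) = s(x, y) := by
  obtain ⟨e, he⟩ := e
  induction e using Sym2.ind with
  | _ x y => exact ⟨x, y, he, rfl⟩

/-- coloring from a vertex cover -/
lemma colorable_KG_of_cover {W : Type*} [Finite W] (G : SimpleGraph W) {S : Set W}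
    (hS : _root_.IsVertexCover G S) : (KG G).Colorable S.ncard := by
  classical
  have hex : ∀ e : G.edgeSet, ∃ v, v ∈ S ∧ v ∈ (e : Sym2 W) := by
    intro e
    obtain ⟨x, y, hadj, hrep⟩ := edge_rep G e
    rcases hS hadj with h | h
    · exact ⟨x, h, by rw [hrep]; simp⟩
    · exact ⟨y, h, by rw [hrep]; simp⟩
  haveI : Fintype ↥S := Fintype.ofFinite _
  have C : (KG G).Coloring ↥S := by
    refine Coloring.mk (fun e => ⟨(hex e).choose, (hex e).choose_spec.1⟩) ?_
    intro e f hadj heq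
    have h1 := (hex e).choose_spec.2
    have h2 := (hex f).choose_spec.2
    have : (hex e).choose = (hex f).choose := congrArg Subtype.val heq
    exact hadj.2 _ h1 (this ▸ h2)
  have := C.colorable
  rwa [show Fintype.card ↥S = S.ncard by
    rw [Set.ncard_eq_toFinset_card']; exact (Set.toFinset_card S).symm] at this

lemma chromNum_le {W : Type*} {G : SimpleGraph W} {m : ℕ} (h : G.Colorable m) :
    chromNum G ≤ m := Nat.sInf_le h

lemma exists_cover_card (G : SimpleGraph V) :
    ∃ S : Set V, _root_.IsVertexCover G S ∧ S.ncard = tauN G := by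
  have h := Nat.sInf_mem (s := {n | ∃ S : Set V, _root_.IsVertexCover G S ∧ S.ncard = n})
    ⟨Set.univ.ncard, Set.univ, fun u v _ => Or.inl trivial, rfl⟩
  exact h

lemma tauN_le {G : SimpleGraph V} {S : Set V} (h : _root_.IsVertexCover G S) :
    tauN G ≤ S.ncard := Nat.sInf_le ⟨S, h, rfl⟩

end Infra

section HkLemmas
variable {V : Type*} {H : SimpleGraph V} {k : ℕ}

lemma hk_adj_ll {u v : V} : (Hk H k).Adj (Sum.inl u) (Sum.inl v) ↔ H.Adj u v := Iff.rfl

lemma hk_adj_lr (u : V) (p : Fin k × Fin 3) : (Hk H k).Adj (Sum.inl u) (Sum.inr p) := trivial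

lemma hk_adj_rr {p q : Fin k × Fin 3} :
    (Hk H k).Adj (Sum.inr p) (Sum.inr q) ↔ p.1 = q.1 ∧ p.2 ≠ q.2 := Iff.rfl

lemma four_fin3 : ∀ (a b c d : Fin 3), a ≠ b → c ≠ d →
    a ≠ c → a ≠ d → b ≠ c → b ≠ d → False := by
  intro a b c d hab hcd h1 h2 h3 h4
  fin_cases a <;> fin_cases b <;> fin_cases c <;> fin_cases d <;> simp_all

/-- Explicit coloring showing `χ(KG(H(k))) ≤ n + k`. -/
lemma colorable_KG_Hk (H : SimpleGraph V) [Fintype V] (k : ℕ) :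
    (KG (Hk H k)).Colorable (Fintype.card V + k) := by
  classical
  set F := Hk H k with hF
  have hcol : ∀ e : F.edgeSet, ¬(∃ v : V, Sum.inl v ∈ (e : Sym2 (V ⊕ Fin k × Fin 3))) →
      ∃ p : Fin k × Fin 3, Sum.inr p ∈ (e : Sym2 (V ⊕ Fin k × Fin 3)) := by
    intro e h
    obtain ⟨x, y, hadj, hrep⟩ := edge_rep F e
    match x, y with
    | Sum.inl u, _ => exact absurd ⟨u, by rw [hrep]; simp⟩ h
    | Sum.inr p, _ => exact ⟨p, by rw [hrep]; simp⟩
  let col : F.edgeSet → V ⊕ Fin k :=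
    fun e => if h : ∃ v : V, Sum.inl v ∈ (e : Sym2 (V ⊕ Fin k × Fin 3))
      then Sum.inl h.choose else Sum.inr (hcol e h).choose.1
  -- in the `else` case, every endpoint is `inr` with the same first coordinate
  have hsame : ∀ e : F.edgeSet, ∀ p q : Fin k × Fin 3,
      Sum.inr p ∈ (e : Sym2 (V ⊕ Fin k × Fin 3)) →
      Sum.inr q ∈ (e : Sym2 (V ⊕ Fin k × Fin 3)) → p.1 = q.1 := by
    intro e p q hp hq
    obtain ⟨x, y, hadj, hrep⟩ := edge_rep F e
    rw [hrep] at hp hq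
    rw [Sym2.mem_iff] at hp hq
    rcases hp with hp | hp <;> rcases hq with hq | hq
    · rw [Sum.inr.inj (hp.trans hq.symm)]
    · rw [← hp, ← hq] at hadj; exact (hk_adj_rr.mp hadj).1
    · rw [← hp, ← hq] at hadj; exact ((hk_adj_rr.mp hadj).1).symm
    · rw [Sum.inr.inj (hp.trans hq.symm)]
  have honly : ∀ e : F.edgeSet, ¬(∃ v : V, Sum.inl v ∈ (e : Sym2 (V ⊕ Fin k × Fin 3))) →
      ∀ w, w ∈ (e : Sym2 (V ⊕ Fin k × Fin 3)) → ∃ p, w = Sum.inr p := by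
    intro e h w hw
    match w with
    | Sum.inl u => exact absurd ⟨u, hw⟩ h
    | Sum.inr p => exact ⟨p, rfl⟩
  have C : (KG F).Coloring (V ⊕ Fin k) := by
    refine Coloring.mk col ?_
    intro e f hadj heq
    by_cases he : ∃ v : V, Sum.inl v ∈ (e : Sym2 (V ⊕ Fin k × Fin 3)) <;>
      by_cases hf : ∃ v : V, Sum.inl v ∈ (f : Sym2 (V ⊕ Fin k × Fin 3)) <;>
      simp only [col, he, hf, dif_pos, dif_neg, not_false_iff] at heq
    · -- both star colors
    
      have h1 := he.choose_spec
      have h2 := hf.choose_spec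
      have : he.choose = hf.choose := by exact Sum.inl.inj (by exact heq)
      exact hadj.2 _ h1 (by rw [this]; exact h2)
    · exact (Sum.inl_ne_inr heq).elim
    · exact (Sum.inr_ne_inl heq).elim
    · -- both triangle colors
      obtain ⟨x, y, hadjE, hrepE⟩ := edge_rep F e
      obtain ⟨x', y', hadjF, hrepF⟩ := edge_rep F f
      obtain ⟨p1, rfl⟩ := honly e he x (by rw [hrepE]; simp)
      obtain ⟨p2, rfl⟩ := honly e he y (by rw [hrepE]; simp)
      obtain ⟨q1, rfl⟩ := honly f hf x' (by rw [hrepF]; simp)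
      obtain ⟨q2, rfl⟩ := honly f hf y' (by rw [hrepF]; simp)
      have hpe := (hcol e he).choose_spec
      have hqf := (hcol f hf).choose_spec
      -- all first coordinates equal
      have e1 : p1.1 = p2.1 := (hk_adj_rr.mp hadjE).1
      have f1 : q1.1 = q2.1 := (hk_adj_rr.mp hadjF).1
      have e2 : (hcol e he).choose.1 = p1.1 := hsame e _ _ hpe (by rw [hrepE]; simp)
      have f2 : (hcol f hf).choose.1 = q1.1 := hsame f _ _ hqf (by rw [hrepF]; simp)
      have hiq : p1.1 = q1.1 := by
        have := Sum.inr.inj heq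
        rw [← e2, ← f2, this]
      -- disjointness gives 4 distinct elements of Fin 3
      have hd : ∀ w, w ∈ (e : Sym2 (V ⊕ Fin k × Fin 3)) →
          w ∉ (f : Sym2 (V ⊕ Fin k × Fin 3)) := hadj.2
      have hne1 : p1 ≠ q1 := by
        intro h; exact hd (Sum.inr p1) (by rw [hrepE]; simp) (by rw [hrepF, h]; simp)
      have hne2 : p1 ≠ q2 := by
        intro h; exact hd (Sum.inr p1) (by rw [hrepE]; simp) (by rw [hrepF, h]; simp)
      have hne3 : p2 ≠ q1 := by
        intro h; exact hd (Sum.inr p2) (by rw [hrepE]; simp) (by rw [hrepF, h]; simp)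
      have hne4 : p2 ≠ q2 := by
        intro h; exact hd (Sum.inr p2) (by rw [hrepE]; simp) (by rw [hrepF, h]; simp)
      have hab : p1.2 ≠ p2.2 := (hk_adj_rr.mp hadjE).2
      have hcd : q1.2 ≠ q2.2 := (hk_adj_rr.mp hadjF).2
      have g1 : p2.1 = q1.1 := by rw [← e1, hiq]
      have g2 : p2.1 = q2.1 := by rw [g1, f1]
      have g3 : p1.1 = q2.1 := by rw [hiq, f1]
      refine four_fin3 _ _ _ _ hab hcd ?_ ?_ ?_ ?_
      · exact fun h => hne1 (Prod.ext hiq h)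
      · exact fun h => hne2 (Prod.ext g3 h)
      · exact fun h => hne3 (Prod.ext g1 h)
      · exact fun h => hne4 (Prod.ext g2 h)
  have := C.colorable
  simpa using this

end HkLemmas

section TauBounds
variable {V : Type*} [Fintype V] {H : SimpleGraph V} {k : ℕ}

lemma ncard_image_union {Q : Set V} {R : Set (Fin k × Fin 3)} :
    (Sum.inl '' Q ∪ Sum.inr '' R : Set (V ⊕ Fin k × Fin 3)).ncard = Q.ncard + R.ncard := by
  rw [Set.ncard_union_eq ?_ (Set.toFinite _) (Set.toFinite _),
    Set.ncard_image_of_injective _ Sum.inl_injective,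
    Set.ncard_image_of_injective _ Sum.inr_injective]
  rw [Set.disjoint_iff_forall_ne]
  rintro x ⟨u, -, rfl⟩ y ⟨p, -, rfl⟩
  simp

lemma tau_upper (H : SimpleGraph V) (k : ℕ) :
    tauN (Hk H k) + _root_.indepNum H ≤ Fintype.card V + 3 * k := by
  obtain ⟨A, hind, hcard⟩ := exists_indep_card H
  have hcov : _root_.IsVertexCover (Hk H k) (Sum.inl '' Aᶜ ∪ Sum.inr '' Set.univ) := by
    rintro (u | p) (v | q) hadj
    · by_cases hu : u ∈ A
      · by_cases hv : v ∈ A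
        · exact absurd hadj (hind u hu v hv)
        · exact Or.inr (Or.inl ⟨v, hv, rfl⟩)
      · exact Or.inl (Or.inl ⟨u, hu, rfl⟩)
    · exact Or.inr (Or.inr ⟨q, trivial, rfl⟩)
    · exact Or.inl (Or.inr ⟨p, trivial, rfl⟩)
    · exact Or.inr (Or.inr ⟨q, trivial, rfl⟩)
  have h1 := tauN_le hcov
  rw [ncard_image_union] at h1
  have h2 : Aᶜ.ncard + _root_.indepNum H = Fintype.card V := by
    rw [← hcard]
    have := Set.ncard_add_ncard_compl A (Set.toFinite _) (Set.toFinite _)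
    rw [Nat.card_eq_fintype_card] at this
    omega
  have h3 : (Set.univ : Set (Fin k × Fin 3)).ncard = 3 * k := by
    rw [Set.ncard_univ, Nat.card_eq_fintype_card]
    simp [mul_comm]
  omega

lemma cover_lower {S : Set (V ⊕ Fin k × Fin 3)} (hS : _root_.IsVertexCover (Hk H k) S) :
    Fintype.card V + 2 * k ≤ S.ncard ∨
    Fintype.card V + 3 * k ≤ S.ncard + _root_.indepNum H := by
  classical
  by_cases hA : ∀ v : V, Sum.inl v ∈ S
  · left
    set P : Set (Fin k × Fin 3) := {p | Sum.inr p ∈ S} with hP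
    have hsub : (Sum.inl '' Set.univ ∪ Sum.inr '' P : Set (V ⊕ Fin k × Fin 3)) ⊆ S := by
      rintro x (⟨u, -, rfl⟩ | ⟨p, hp, rfl⟩)
      · exact hA u
      · exact hp
    have h1 : Fintype.card V + P.ncard ≤ S.ncard := by
      have := Set.ncard_le_ncard hsub (Set.toFinite _)
      rw [ncard_image_union, Set.ncard_univ, Nat.card_eq_fintype_card] at this
      exact this
    have h2 : Pᶜ.ncard ≤ k := by
      have : Pᶜ.ncard ≤ (Set.univ : Set (Fin k)).ncard := by
        apply Set.ncard_le_ncard_of_injOn Prod.fst (fun p _ => Set.mem_univ _)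
        intro p hp q hq hfst
        by_contra hne
        have hsnd : p.2 ≠ q.2 := fun h => hne (Prod.ext hfst h)
        rcases hS (show (Hk H k).Adj (Sum.inr p) (Sum.inr q) from ⟨hfst, hsnd⟩) with h | h
        · exact hp h
        · exact hq h
      rwa [Set.ncard_univ, Nat.card_eq_fintype_card, Fintype.card_fin] at this
    have h3 : P.ncard + Pᶜ.ncard = 3 * k := by
      have := Set.ncard_add_ncard_compl P (Set.toFinite _) (Set.toFinite _)
      rw [Nat.card_eq_fintype_card] at this
      simpa [mul_comm] using this
    omega
  · right
    push_neg at hA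
    obtain ⟨v0, hv0⟩ := hA
    have hBall : ∀ p : Fin k × Fin 3, Sum.inr p ∈ S := by
      intro p
      rcases hS (show (Hk H k).Adj (Sum.inl v0) (Sum.inr p) from trivial) with h | h
      · exact absurd h hv0
      · exact h
    set A : Set V := {v | Sum.inl v ∉ S} with hAdef
    have hind : ∀ u ∈ A, ∀ v ∈ A, ¬ H.Adj u v := by
      intro u hu v hv hadj
      rcases hS (show (Hk H k).Adj (Sum.inl u) (Sum.inl v) from hadj) with h | h
      · exact hu h
      · exact hv h
    have hαA : A.ncard ≤ _root_.indepNum H := le_indepNum hind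
    have hsub : (Sum.inl '' Aᶜ ∪ Sum.inr '' Set.univ : Set (V ⊕ Fin k × Fin 3)) ⊆ S := by
      rintro x (⟨u, hu, rfl⟩ | ⟨p, -, rfl⟩)
      · exact not_not.mp hu
      · exact hBall p
    have h1 := Set.ncard_le_ncard hsub (Set.toFinite _)
    rw [ncard_image_union] at h1
    have h2 : Aᶜ.ncard + A.ncard = Fintype.card V := by
      have := Set.ncard_add_ncard_compl A (Set.toFinite _) (Set.toFinite _)
      rw [Nat.card_eq_fintype_card] at this
      omega
    have h3 : (Set.univ : Set (Fin k × Fin 3)).ncard = 3 * k := by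
      rw [Set.ncard_univ, Nat.card_eq_fintype_card]
      simp [mul_comm]
    omega

end TauBounds

section Structure
variable {W : Type*}

lemma mem_of_eq_rep {G : SimpleGraph W} {e : G.edgeSet} {x y v : W}
    (hrep : (e : Sym2 W) = s(x, y)) (hv : v ∈ (e : Sym2 W)) : v = x ∨ v = y := by
  rw [hrep] at hv; rwa [Sym2.mem_iff] at hv

lemma intersecting_structure [Nonempty W] (G : SimpleGraph W)
    (P : G.edgeSet → Prop)
    (hint : ∀ e f, P e → P f → e ≠ f → ∃ v, v ∈ (e : Sym2 W) ∧ v ∈ (f : Sym2 W))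
    (hnostar : ¬ ∃ v, ∀ e, P e → v ∈ (e : Sym2 W)) :
    ∃ x y z, G.Adj x y ∧ G.Adj y z ∧ G.Adj x z ∧
      ∀ e, P e → ∀ v, v ∈ (e : Sym2 W) → v = x ∨ v = y ∨ v = z := by
  push_neg at hnostar
  -- some edge with property P
  have hPne : ∃ e, P e := by
    obtain ⟨e, hPe, -⟩ := hnostar (Classical.arbitrary W)
    exact ⟨e, hPe⟩
  obtain ⟨e0, hPe0⟩ := hPne
  obtain ⟨x, y, hxy, hrep0⟩ := edge_rep G e0
  -- an edge avoiding x
  obtain ⟨e2, hPe2, hxe2⟩ := hnostar x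
  have hne02 : e0 ≠ e2 := by
    rintro rfl; exact hxe2 (by rw [hrep0]; simp)
  have hye2 : y ∈ (e2 : Sym2 W) := by
    obtain ⟨v, hv0, hv2⟩ := hint e0 e2 hPe0 hPe2 hne02
    rcases mem_of_eq_rep hrep0 hv0 with rfl | rfl
    · exact absurd hv2 hxe2
    · exact hv2
  obtain ⟨p, q, hpq, hrep2⟩ := edge_rep G e2
  have hrep2' : ∃ z, G.Adj y z ∧ (e2 : Sym2 W) = s(y, z) := by
    rcases mem_of_eq_rep hrep2 hye2 with rfl | rfl
    · exact ⟨q, hpq, hrep2⟩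
    · exact ⟨p, hpq.symm, by rw [hrep2, Sym2.eq_swap]⟩
  obtain ⟨z, hyz, hrep2⟩ := hrep2'
  have hzx : z ≠ x := by
    rintro rfl; exact hxe2 (by rw [hrep2]; simp)
  -- an edge avoiding y
  obtain ⟨e3, hPe3, hye3⟩ := hnostar y
  have hne03 : e0 ≠ e3 := by
    rintro rfl; exact hye3 (by rw [hrep0]; simp)
  have hxe3 : x ∈ (e3 : Sym2 W) := by
    obtain ⟨v, hv0, hv3⟩ := hint e0 e3 hPe0 hPe3 hne03
    rcases mem_of_eq_rep hrep0 hv0 with rfl | rfl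
    · exact hv3
    · exact absurd hv3 hye3
  obtain ⟨p', q', hpq', hrep3⟩ := edge_rep G e3
  have hrep3' : ∃ w, G.Adj x w ∧ (e3 : Sym2 W) = s(x, w) := by
    rcases mem_of_eq_rep hrep3 hxe3 with rfl | rfl
    · exact ⟨q', hpq', hrep3⟩
    · exact ⟨p', hpq'.symm, by rw [hrep3, Sym2.eq_swap]⟩
  obtain ⟨w, hxw, hrep3⟩ := hrep3'
  -- w = z
  have hne23 : e2 ≠ e3 := by
    rintro rfl; exact hye3 (by rw [hrep2]; simp)
  have hwz : w = z := by
    obtain ⟨v, hv2, hv3⟩ := hint e2 e3 hPe2 hPe3 hne23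
    rcases mem_of_eq_rep hrep2 hv2 with h1 | h1
    · rw [h1] at hv3; exact absurd hv3 hye3
    · rcases mem_of_eq_rep hrep3 hv3 with h2 | h2
      · exact absurd (h1.symm.trans h2) hzx
      · exact (h1.symm.trans h2).symm
  rw [hwz] at hrep3 hxw
  refine ⟨x, y, z, hxy, hyz, hxw, ?_⟩
  intro e hPe v hv
  by_contra hvn
  push_neg at hvn
  obtain ⟨hvx, hvy, hvz⟩ := hvn
  obtain ⟨u1, u2, hu, hrepE⟩ := edge_rep G e
  -- v is one of u1 u2 ; the other endpoint must lie in all three pairs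
  have key : ∀ u1 u2 : W, G.Adj u1 u2 → (e : Sym2 W) = s(u1, u2) → v = u1 → False := by
    intro u1 u2 hu hrepE hv1
    subst hv1
    have h0 : u2 = x ∨ u2 = y := by
      have hne : e ≠ e0 := by
        rintro rfl
        rcases mem_of_eq_rep hrep0 hv with rfl | rfl
        · exact hvx rfl
        · exact hvy rfl
      obtain ⟨v', hvE, hv0⟩ := hint e e0 hPe hPe0 hne
      rcases mem_of_eq_rep hrepE hvE with rfl | rfl
      · rcases mem_of_eq_rep hrep0 hv0 with rfl | rfl
        · exact absurd rfl hvx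
        · exact absurd rfl hvy
      · exact mem_of_eq_rep hrep0 hv0
    have h2 : u2 = y ∨ u2 = z := by
      have hne : e ≠ e2 := by
        rintro rfl
        rcases mem_of_eq_rep hrep2 hv with rfl | rfl
        · exact hvy rfl
        · exact hvz rfl
      obtain ⟨v', hvE, hv2⟩ := hint e e2 hPe hPe2 hne
      rcases mem_of_eq_rep hrepE hvE with rfl | rfl
      · rcases mem_of_eq_rep hrep2 hv2 with rfl | rfl
        · exact absurd rfl hvy
        · exact absurd rfl hvz
      · exact mem_of_eq_rep hrep2 hv2
    have h3 : u2 = x ∨ u2 = z := by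
      have hne : e ≠ e3 := by
        rintro rfl
        rcases mem_of_eq_rep hrep3 hv with rfl | rfl
        · exact hvx rfl
        · exact hvz rfl
      obtain ⟨v', hvE, hv3⟩ := hint e e3 hPe hPe3 hne
      rcases mem_of_eq_rep hrepE hvE with rfl | rfl
      · rcases mem_of_eq_rep hrep3 hv3 with rfl | rfl
        · exact absurd rfl hvx
        · exact absurd rfl hvz
      · exact mem_of_eq_rep hrep3 hv3
    rcases h0 with rfl | rfl
    · rcases h2 with h | h
      · exact hxy.ne h
      · exact hzx h.symm
    · rcases h3 with h | h
      · exact hxy.ne h.symm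
      · exact hyz.ne h
  rcases mem_of_eq_rep hrepE hv with rfl | rfl
  · exact key _ _ hu hrepE rfl
  · exact key _ _ hu.symm (by rw [hrepE, Sym2.eq_swap]) rfl

end Structure

section Lower
variable {V : Type*} [Fintype V]

lemma chrom_lower {H : SimpleGraph V} (hconn : H.Connected) (htf : H.CliqueFree 3)
    {k : ℕ} (hk : 1 ≤ k) (hα : 2 * k ≤ _root_.indepNum H)
    {c : ℕ} (hc : (KG (Hk H k)).Colorable c) :
    Fintype.card V + 3 * k ≤ c + _root_.indepNum H := by
  classical
  obtain ⟨C⟩ := hc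
  haveI hne : Nonempty (V ⊕ Fin k × Fin 3) := ⟨Sum.inr (⟨0, hk⟩, 0)⟩
  set occ : Fin c → Prop := fun j => ∃ e : (Hk H k).edgeSet, C e = j with hocc_def
  set star : Fin c → Prop :=
    fun j => ∃ v, ∀ e : (Hk H k).edgeSet, C e = j → v ∈ (e : Sym2 (V ⊕ Fin k × Fin 3))
    with hstar_def
  set SC : Finset (Fin c) := Finset.univ.filter fun j => occ j ∧ star j with hSC_def
  set TC : Finset (Fin c) := Finset.univ.filter fun j => occ j ∧ ¬ star j with hTC_def
  have hSCTC : SC.card + TC.card ≤ c := by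
    have hdisj : Disjoint SC TC := by
      rw [Finset.disjoint_left]
      intro j hj1 hj2
      rw [hSC_def, Finset.mem_filter] at hj1
      rw [hTC_def, Finset.mem_filter] at hj2
      exact hj2.2.2 hj1.2.2
    calc SC.card + TC.card = (SC ∪ TC).card := (Finset.card_union_of_disjoint hdisj).symm
      _ ≤ (Finset.univ : Finset (Fin c)).card := Finset.card_le_card (Finset.subset_univ _)
      _ = c := by simp
  -- star centers
  have hctr' : ∀ j : Fin c, ∃ v, j ∈ SC →
      ∀ e : (Hk H k).edgeSet, C e = j → v ∈ (e : Sym2 (V ⊕ Fin k × Fin 3)) := by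
    intro j
    by_cases hj : j ∈ SC
    · rw [hSC_def, Finset.mem_filter] at hj
      obtain ⟨v, hv⟩ := hj.2.2
      exact ⟨v, fun _ => hv⟩
    · exact ⟨Classical.arbitrary _, fun h => absurd h hj⟩
  choose ctr hctr using hctr'
  set Sset : Finset (V ⊕ Fin k × Fin 3) := SC.image ctr with hSset_def
  have hScard : Sset.card ≤ SC.card := Finset.card_image_le
  -- intersecting classes
  have hcommon : ∀ e f : (Hk H k).edgeSet, C e = C f → e ≠ f →
      ∃ v, v ∈ (e : Sym2 (V ⊕ Fin k × Fin 3)) ∧ v ∈ (f : Sym2 (V ⊕ Fin k × Fin 3)) := by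
    intro e f h hnef
    by_contra hno
    push_neg at hno
    exact C.valid ⟨hnef, hno⟩ h
  -- triangle structure for non-star classes
  have htri' : ∀ j : Fin c, ∃ x y z : V ⊕ Fin k × Fin 3, j ∈ TC →
      (Hk H k).Adj x y ∧ (Hk H k).Adj y z ∧ (Hk H k).Adj x z ∧
      ∀ e : (Hk H k).edgeSet, C e = j →
        ∀ v, v ∈ (e : Sym2 (V ⊕ Fin k × Fin 3)) → v = x ∨ v = y ∨ v = z := by
    intro j
    by_cases hj : j ∈ TC
    · rw [hTC_def, Finset.mem_filter] at hj
      obtain ⟨x, y, z, h1, h2, h3, h4⟩ := intersecting_structure (Hk H k)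
        (fun e => C e = j)
        (fun e f he hf hnef => hcommon e f (he.trans hf.symm) hnef) hj.2.2
      exact ⟨x, y, z, fun _ => ⟨h1, h2, h3, h4⟩⟩
    · exact ⟨Classical.arbitrary _, Classical.arbitrary _, Classical.arbitrary _,
        fun h => absurd h hj⟩
  choose X Y Z hXYZ using htri'
  set tri : Fin c → Finset (V ⊕ Fin k × Fin 3) := fun j => {X j, Y j, Z j} with htri_def
  have htricard : ∀ j, (tri j).card ≤ 3 := by
    intro j
    refine le_trans (Finset.card_insert_le _ _) (Nat.succ_le_succ ?_)
    refine le_trans (Finset.card_insert_le _ _) (Nat.succ_le_succ ?_)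
    simp
  have hmem_tri : ∀ j ∈ TC, ∀ e : (Hk H k).edgeSet, C e = j →
      ∀ v, v ∈ (e : Sym2 (V ⊕ Fin k × Fin 3)) → v ∈ tri j := by
    intro j hj e he v hv
    rcases (hXYZ j hj).2.2.2 e he v hv with h | h | h <;>
      simp [htri_def, h]
  have hpair : ∀ j ∈ TC, ∀ a b : V ⊕ Fin k × Fin 3, a ∈ tri j → b ∈ tri j →
      a = b ∨ (Hk H k).Adj a b := by
    intro j hj a b ha hb
    obtain ⟨h1, h2, h3, -⟩ := hXYZ j hj
    rw [htri_def] at ha hb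
    simp only [Finset.mem_insert, Finset.mem_singleton] at ha hb
    rcases ha with rfl | rfl | rfl <;> rcases hb with rfl | rfl | rfl
    · exact Or.inl rfl
    · exact Or.inr h1
    · exact Or.inr h3
    · exact Or.inr h1.symm
    · exact Or.inl rfl
    · exact Or.inr h2
    · exact Or.inr h3.symm
    · exact Or.inr h2.symm
    · exact Or.inl rfl
  have hexists_inr : ∀ j ∈ TC, ∃ p, Sum.inr p ∈ tri j := by
    intro j hj
    obtain ⟨h1, h2, h3, -⟩ := hXYZ j hj
    match hX : X j, hY : Y j, hZ : Z j with
    | Sum.inl u, Sum.inl v, Sum.inl w =>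
      exfalso
      simp only [hX, hY, hZ] at h1 h2 h3
      exact htf {u, v, w} (SimpleGraph.is3Clique_triple_iff.mpr ⟨h1, h3, h2⟩)
    | Sum.inr p, _, _ => exact ⟨p, by simp [htri_def, hX]⟩
    | _, Sum.inr p, _ => exact ⟨p, by simp [htri_def, hY]⟩
    | _, _, Sum.inr p => exact ⟨p, by simp [htri_def, hZ]⟩
  have hidx' : ∀ j : Fin c, ∃ i : Fin k, j ∈ TC →
      ∀ p, Sum.inr p ∈ tri j → p.1 = i := by
    intro j
    by_cases hj : j ∈ TC
    · obtain ⟨p0, hp0⟩ := hexists_inr j hj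
      refine ⟨p0.1, fun _ p hp => ?_⟩
      rcases hpair j hj _ _ hp hp0 with h | h
      · rw [Sum.inr.inj h]
      · exact (hk_adj_rr.mp h).1
    · exact ⟨⟨0, hk⟩, fun h => absurd h hj⟩
  choose idx hidx using hidx'
  have hinl2 : ∀ j ∈ TC, ((tri j).filter (fun w => w.isLeft)).card ≤ 2 := by
    intro j hj
    obtain ⟨p0, hp0⟩ := hexists_inr j hj
    have hsub : (tri j).filter (fun w => w.isLeft) ⊆ (tri j).erase (Sum.inr p0) := by
      intro w hw
      rw [Finset.mem_filter] at hw
      refine Finset.mem_erase.mpr ⟨?_, hw.1⟩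
      rintro rfl
      simp at hw
    have h1 := Finset.card_le_card hsub
    have h2 := Finset.card_erase_of_mem hp0
    have := htricard j
    omega
  -- uncovered edges are in triangle classes
  have huncov : ∀ {x y : V ⊕ Fin k × Fin 3} (hadj : (Hk H k).Adj x y),
      x ∉ Sset → y ∉ Sset → C ⟨s(x, y), hadj⟩ ∈ TC := by
    intro x y hadj hx hy
    have hocc : occ (C ⟨s(x, y), hadj⟩) := ⟨_, rfl⟩
    have hnstar : ¬ star (C ⟨s(x, y), hadj⟩) := by
      intro hstar
      have hjSC : C ⟨s(x, y), hadj⟩ ∈ SC := by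
        rw [hSC_def, Finset.mem_filter]
        exact ⟨Finset.mem_univ _, hocc, hstar⟩
      have h1 : ctr (C ⟨s(x, y), hadj⟩) ∈ Sset := Finset.mem_image_of_mem _ hjSC
      have h2 := hctr _ hjSC ⟨s(x, y), hadj⟩ rfl
      rw [Sym2.mem_iff] at h2
      rcases h2 with h2 | h2
      · rw [h2] at h1; exact hx h1
      · rw [h2] at h1; exact hy h1
    rw [hTC_def, Finset.mem_filter]
    exact ⟨Finset.mem_univ _, hocc, hnstar⟩
  -- A and B
  set A : Finset V := Finset.univ.filter (fun v => ¬ Sum.inl v ∈ Sset) with hA_def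
  set B : Finset (Fin k × Fin 3) := Finset.univ.filter (fun p => ¬ Sum.inr p ∈ Sset)
    with hB_def
  have hAcard : (Finset.univ.filter (fun v : V => Sum.inl v ∈ Sset)).card + A.card
      = Fintype.card V := by
    rw [hA_def, Finset.card_filter_add_card_filter_not]
    simp
  have hBcard : (Finset.univ.filter (fun p : Fin k × Fin 3 => Sum.inr p ∈ Sset)).card
      + B.card = 3 * k := by
    rw [hB_def, Finset.card_filter_add_card_filter_not]
    simp [mul_comm]
  have hsplit : (Finset.univ.filter (fun v : V => Sum.inl v ∈ Sset)).card
      + (Finset.univ.filter (fun p : Fin k × Fin 3 => Sum.inr p ∈ Sset)).card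
      ≤ Sset.card := by
    have hsub : ((Finset.univ.filter (fun v : V => Sum.inl v ∈ Sset)).image Sum.inl
        ∪ (Finset.univ.filter (fun p : Fin k × Fin 3 => Sum.inr p ∈ Sset)).image Sum.inr)
        ⊆ Sset := by
      intro w hw
      rw [Finset.mem_union] at hw
      rcases hw with hw | hw <;> obtain ⟨u, hu, rfl⟩ := Finset.mem_image.mp hw <;>
        exact (Finset.mem_filter.mp hu).2
    have hdisj : Disjoint
        ((Finset.univ.filter (fun v : V => Sum.inl v ∈ Sset)).image Sum.inl)
        ((Finset.univ.filter (fun p : Fin k × Fin 3 => Sum.inr p ∈ Sset)).image Sum.inr) := by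
      rw [Finset.disjoint_left]
      rintro w hw1 hw2
      obtain ⟨u, -, rfl⟩ := Finset.mem_image.mp hw1
      obtain ⟨p, -, hp⟩ := Finset.mem_image.mp hw2
      exact Sum.inr_ne_inl hp
    have h1 := Finset.card_le_card hsub
    rw [Finset.card_union_of_disjoint hdisj,
      Finset.card_image_of_injective _ Sum.inl_injective,
      Finset.card_image_of_injective _ Sum.inr_injective] at h1
    exact h1
  -- the key combinatorial inequality
  suffices hkey : A.card + B.card ≤ TC.card + _root_.indepNum H by omega
  -- fibers over triangles
  set Bi : Fin k → Finset (Fin k × Fin 3) := fun i => B.filter (fun p => p.1 = i) with hBi_def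
  set TCi : Fin k → Finset (Fin c) := fun i => TC.filter (fun j => idx j = i) with hTCi_def
  have hBsum : B.card = ∑ i, (Bi i).card :=
    Finset.card_eq_sum_card_fiberwise (f := Prod.fst) (fun p _ => Finset.mem_univ _)
  have hTsum : TC.card = ∑ i, (TCi i).card :=
    Finset.card_eq_sum_card_fiberwise (f := idx) (fun j _ => Finset.mem_univ _)
  have hBi3 : ∀ i, (Bi i).card ≤ 3 := by
    intro i
    have hsub : Bi i ⊆ (Finset.univ : Finset (Fin 3)).image (fun x => (i, x)) := by
      intro p hp
      rw [hBi_def] at hp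
      simp only [Finset.mem_filter] at hp
      exact Finset.mem_image.mpr ⟨p.2, Finset.mem_univ _, by rw [← hp.2]⟩
    refine (Finset.card_le_card hsub).trans (Finset.card_image_le.trans (by simp))
  have hA_mem : ∀ {v : V}, v ∈ A ↔ Sum.inl v ∉ Sset := by
    intro v; rw [hA_def]; simp
  have hB_mem : ∀ {p : Fin k × Fin 3}, p ∈ B ↔ Sum.inr p ∉ Sset := by
    intro p; rw [hB_def]; simp
  -- classes of specific edges
  have hclassBB : ∀ {p q : Fin k × Fin 3} (hadj : (Hk H k).Adj (Sum.inr p) (Sum.inr q)),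
      p ∈ B → q ∈ B → C ⟨s(Sum.inr p, Sum.inr q), hadj⟩ ∈ TCi p.1 := by
    intro p q hadj hp hq
    have hj := huncov hadj (hB_mem.mp hp) (hB_mem.mp hq)
    rw [hTCi_def]
    simp only [Finset.mem_filter]
    exact ⟨hj, (hidx _ hj p (hmem_tri _ hj _ rfl _ (by simp))).symm⟩
  have hclassAB : ∀ {v : V} {p : Fin k × Fin 3}, v ∈ A → p ∈ B →
      C ⟨s(Sum.inl v, Sum.inr p), hk_adj_lr (H := H) v p⟩ ∈ TCi p.1 := by
    intro v p hv hp
    have hj := huncov (hk_adj_lr (H := H) v p) (hA_mem.mp hv) (hB_mem.mp hp)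
    rw [hTCi_def]
    simp only [Finset.mem_filter]
    exact ⟨hj, (hidx _ hj p (hmem_tri _ hj _ rfl _ (by simp))).symm⟩
  by_cases hA0 : A.card = 0
  · -- Case a = 0
    have hclaim : ∀ i, (Bi i).card ≤ 2 + (TCi i).card := by
      intro i
      by_cases hb : (Bi i).card ≤ 2
      · omega
      · have h2 : 1 < (Bi i).card := by omega
        obtain ⟨p, hp, q, hq, hpq⟩ := Finset.one_lt_card.mp h2
        rw [hBi_def] at hp hq
        simp only [Finset.mem_filter] at hp hq
        have hfst : p.1 = q.1 := hp.2.trans hq.2.symm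
        have hadj : (Hk H k).Adj (Sum.inr p) (Sum.inr q) :=
          hk_adj_rr.mpr ⟨hfst, fun h => hpq (Prod.ext hfst h)⟩
        have hjm := hclassBB hadj hp.1 hq.1
        rw [hp.2] at hjm
        have h1 : 1 ≤ (TCi i).card := Finset.card_pos.mpr ⟨_, hjm⟩
        have := hBi3 i
        omega
    have hBb : B.card ≤ 2 * k + TC.card := by
      rw [hBsum, hTsum]
      calc ∑ i, (Bi i).card ≤ ∑ i, (2 + (TCi i).card) :=
            Finset.sum_le_sum (fun i _ => hclaim i)
        _ = 2 * k + ∑ i, (TCi i).card := by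
            rw [Finset.sum_add_distrib]
            simp [mul_comm]
    omega
  by_cases hA1 : A.card = 1
  · -- Case a = 1
    obtain ⟨h0, hAh0⟩ := Finset.card_eq_one.mp hA1
    have hh0A : h0 ∈ A := by rw [hAh0]; simp
    have hclaim : ∀ i, (Bi i).card ≤ 1 + (TCi i).card := by
      intro i
      by_cases hb1 : (Bi i).card ≤ 1
      · omega
      by_cases hb2 : (Bi i).card ≤ 2
      · -- two distinct elements give a class
        have h2 : 1 < (Bi i).card := by omega
        obtain ⟨p, hp, q, hq, hpq⟩ := Finset.one_lt_card.mp h2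
        rw [hBi_def] at hp hq
        simp only [Finset.mem_filter] at hp hq
        have hfst : p.1 = q.1 := hp.2.trans hq.2.symm
        have hadj : (Hk H k).Adj (Sum.inr p) (Sum.inr q) :=
          hk_adj_rr.mpr ⟨hfst, fun h => hpq (Prod.ext hfst h)⟩
        have hjm := hclassBB hadj hp.1 hq.1
        rw [hp.2] at hjm
        have h1 : 1 ≤ (TCi i).card := Finset.card_pos.mpr ⟨_, hjm⟩
        omega
      · -- (Bi i).card = 3 : need two classes
        have hb3 : (Bi i).card = 3 := le_antisymm (hBi3 i) (by omega)
        have hBiall : ∀ x : Fin 3, (i, x) ∈ B := by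
          have hsub : Bi i ⊆ (Finset.univ : Finset (Fin 3)).image (fun x => (i, x)) := by
            intro p hp
            rw [hBi_def] at hp
            simp only [Finset.mem_filter] at hp
            exact Finset.mem_image.mpr ⟨p.2, Finset.mem_univ _, by rw [← hp.2]⟩
          have heq : Bi i = (Finset.univ : Finset (Fin 3)).image (fun x => (i, x)) := by
            apply Finset.eq_of_subset_of_card_le hsub
            refine Finset.card_image_le.trans ?_
            simp [hb3]
          intro x
          have : (i, x) ∈ Bi i := by
            rw [heq]; exact Finset.mem_image.mpr ⟨x, Finset.mem_univ _, rfl⟩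
          rw [hBi_def] at this
          exact (Finset.mem_filter.mp this).1
        suffices h2c : 2 ≤ (TCi i).card by omega
        by_contra hlt
        push_neg at hlt
        have hedge : ∀ x : Fin 3,
            C ⟨s(Sum.inl h0, Sum.inr (i, x)), hk_adj_lr (H := H) h0 (i, x)⟩ ∈ TCi i :=
          fun x => hclassAB hh0A (hBiall x)
        set j := C ⟨s(Sum.inl h0, Sum.inr (i, (0 : Fin 3))), hk_adj_lr (H := H) h0 (i, 0)⟩ with hj_def
        have hji : j ∈ TCi i := hedge 0
        have huniq : ∀ j' ∈ TCi i, j' = j := by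
          intro j' hj'
          by_contra hne'
          have : 1 < (TCi i).card := Finset.one_lt_card.mpr ⟨j', hj', j, hji, hne'⟩
          omega
        have hjTC : j ∈ TC := by
          have := hji; rw [hTCi_def] at this; exact (Finset.mem_filter.mp this).1
    
        have hsub4 : ({Sum.inl h0, Sum.inr (i, (0:Fin 3)), Sum.inr (i, (1:Fin 3)),
            Sum.inr (i, (2:Fin 3))} : Finset (V ⊕ Fin k × Fin 3)) ⊆ tri j := by
          intro w hw
          simp only [Finset.mem_insert, Finset.mem_singleton] at hw
          rcases hw with rfl | rfl | rfl | rfl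
          · exact hmem_tri _ hjTC _ rfl _ (by simp)
          · exact hmem_tri _ hjTC _ rfl _ (by simp)
          · exact hmem_tri _ hjTC _ (huniq _ (hedge 1)) _ (by simp)
          · exact hmem_tri _ hjTC _ (huniq _ (hedge 2)) _ (by simp)
        have hcard4 : ({Sum.inl h0, Sum.inr (i, (0:Fin 3)), Sum.inr (i, (1:Fin 3)),
            Sum.inr (i, (2:Fin 3))} : Finset (V ⊕ Fin k × Fin 3)).card = 4 := by
          rw [Finset.card_insert_of_notMem (by simp),
            Finset.card_insert_of_notMem (by simp [Prod.ext_iff]),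
            Finset.card_insert_of_notMem (by simp [Prod.ext_iff]),
            Finset.card_singleton]
        have hle := Finset.card_le_card hsub4
        have := htricard j
        omega
    have hBb : B.card ≤ k + TC.card := by
      rw [hBsum, hTsum]
      calc ∑ i, (Bi i).card ≤ ∑ i, (1 + (TCi i).card) :=
            Finset.sum_le_sum (fun i _ => hclaim i)
        _ = k + ∑ i, (TCi i).card := by
            rw [Finset.sum_add_distrib]
            simp
    omega
  -- Case a ≥ 2
  have hA2 : 2 ≤ A.card := by omega
  obtain ⟨v₀A, hv₀A⟩ : A.Nonempty := Finset.card_pos.mp (by omega)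
  haveI : Nonempty V := ⟨v₀A⟩
  haveI : Nonempty (Fin c) :=
    ⟨C ⟨s(Sum.inl v₀A, Sum.inr (⟨0, hk⟩, 0)), hk_adj_lr (H := H) v₀A (⟨0, hk⟩, 0)⟩⟩
  by_cases hB2 : 2 ≤ B.card
  · -- product bound
    have hprod : ∀ i, A.card * (Bi i).card ≤ 2 * (TCi i).card := by
      intro i
      have hmaps : ∀ vp ∈ A ×ˢ Bi i,
          (fun vp : V × (Fin k × Fin 3) =>
            C ⟨s(Sum.inl vp.1, Sum.inr vp.2), hk_adj_lr (H := H) vp.1 vp.2⟩) vp ∈ TCi i := by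
        intro vp hvp
        rw [Finset.mem_product] at hvp
        have hpB : vp.2 ∈ Bi i := hvp.2
        rw [hBi_def] at hpB
        simp only [Finset.mem_filter] at hpB
        have := hclassAB hvp.1 hpB.1
        rwa [hpB.2] at this
      have hfib : ∀ j ∈ TCi i, ((A ×ˢ Bi i).filter
          (fun vp : V × (Fin k × Fin 3) =>
            C ⟨s(Sum.inl vp.1, Sum.inr vp.2), hk_adj_lr (H := H) vp.1 vp.2⟩ = j)).card ≤ 2 := by
        intro j hj
        have hjTC : j ∈ TC := by
          rw [hTCi_def] at hj; exact (Finset.mem_filter.mp hj).1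
        have hinj : ((A ×ˢ Bi i).filter
            (fun vp : V × (Fin k × Fin 3) =>
              C ⟨s(Sum.inl vp.1, Sum.inr vp.2), hk_adj_lr (H := H) vp.1 vp.2⟩ = j)).card ≤
            (((tri j).filter (fun w => w.isLeft)) ×ˢ
              ((tri j).filter (fun w => ¬ w.isLeft))).card := by
          apply Finset.card_le_card_of_injOn
            (fun vp : V × (Fin k × Fin 3) => (Sum.inl vp.1, Sum.inr vp.2))
          · intro vp hvp
            rw [Finset.mem_coe, Finset.mem_filter] at hvp
            rw [Finset.mem_coe, Finset.mem_product]
            constructor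
            · rw [Finset.mem_filter]
              exact ⟨hmem_tri _ hjTC _ hvp.2 _ (by simp), by simp⟩
            · rw [Finset.mem_filter]
              exact ⟨hmem_tri _ hjTC _ hvp.2 _ (by simp), by simp⟩
          · intro a _ b _ h
            rw [Prod.ext_iff] at h
            exact Prod.ext (Sum.inl.inj h.1) (Sum.inr.inj h.2)
        rw [Finset.card_product] at hinj
        have hLR := Finset.card_filter_add_card_filter_not
          (s := tri j) (p := fun w => w.isLeft = true)
        have h3 : ((tri j).filter (fun w => w.isLeft)).card +
            ((tri j).filter (fun w => ¬ w.isLeft)).card ≤ 3 := by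
          have := htricard j
          omega
        have h2 := hinl2 j hjTC
        have hcase : ((tri j).filter (fun w => w.isLeft)).card = 0 ∨
            ((tri j).filter (fun w => w.isLeft)).card = 1 ∨
            ((tri j).filter (fun w => w.isLeft)).card = 2 := by omega
        rcases hcase with h | h | h <;> rw [h] at hinj <;> omega
      have := Finset.card_le_mul_card_image_of_maps_to hmaps 2 hfib
      rwa [Finset.card_product] at this
    have hABt : A.card * B.card ≤ 2 * TC.card := by
      rw [hBsum, hTsum, Finset.mul_sum, Finset.mul_sum]
      exact Finset.sum_le_sum fun i _ => hprod i
    have h4 : 2 * A.card + 2 * B.card ≤ A.card * B.card + 4 := by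
      obtain ⟨a, ha⟩ := Nat.exists_eq_add_of_le hA2
      obtain ⟨b, hb⟩ := Nat.exists_eq_add_of_le hB2
      rw [ha, hb]
      ring_nf
      nlinarith [Nat.zero_le (a * b)]
    omega
  · -- B.card ≤ 1
    push_neg at hB2
    -- maximal independent subset of A
    obtain ⟨m, hmA, hmind, hmmax⟩ : ∃ m : Finset V, m ⊆ A ∧
        (∀ u ∈ m, ∀ v ∈ m, ¬ H.Adj u v) ∧
        ∀ v ∈ A, v ∉ m → ∃ u ∈ m, H.Adj v u := by
      obtain ⟨m, hm, hmax⟩ := Finset.exists_maximal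
        (s := A.powerset.filter (fun s => ∀ u ∈ s, ∀ v ∈ s, ¬ H.Adj u v))
        ⟨∅, by simp⟩
      beta_reduce at hm
      rw [Finset.mem_filter, Finset.mem_powerset] at hm
      refine ⟨m, hm.1, hm.2, ?_⟩
      intro v hv hvm
      by_contra hno
      push_neg at hno
      have hmem : insert v m ∈ A.powerset.filter
          (fun s => ∀ u ∈ s, ∀ v ∈ s, ¬ H.Adj u v) := by
        rw [Finset.mem_filter, Finset.mem_powerset]
        constructor
        · exact Finset.insert_subset hv hm.1
        · intro u hu w hw hadj
          rcases Finset.mem_insert.mp hu with rfl | hu'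
          · rcases Finset.mem_insert.mp hw with rfl | hw'
            · exact H.irrefl hadj
            · exact hno w hw' hadj
          · rcases Finset.mem_insert.mp hw with rfl | hw'
            · exact hno u hu' hadj.symm
            · exact hm.2 u hu' w hw' hadj
      exact hvm (Finset.le_iff_subset.mp (hmax hmem (Finset.subset_insert _ _)) (Finset.mem_insert_self v m))
    have hmcard : m.card ≤ _root_.indepNum H := by
      have h := le_indepNum (H := H) (A := (↑m : Set V)) (by
        intro u hu v hv
        exact hmind u (by simpa using hu) v (by simpa using hv))
      rwa [Set.ncard_coe_finset] at h
    set D : Finset V := A.filter (fun v => v ∉ m) with hD_def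
    have hDA : A.card = m.card + D.card := by
      have h1 := Finset.card_filter_add_card_filter_not
        (s := A) (p := fun v => v ∈ m)
      have hfm : A.filter (fun v => v ∈ m) = m := by
        apply Finset.Subset.antisymm
        · intro v hv; exact (Finset.mem_filter.mp hv).2
        · intro v hv; exact Finset.mem_filter.mpr ⟨hmA hv, hv⟩
      rw [hfm] at h1
      rw [hD_def]
      omega
    have hDsubA : D ⊆ A := by rw [hD_def]; exact Finset.filter_subset _ _
    have hDnm : ∀ v ∈ D, v ∉ m := by
      intro v hv; rw [hD_def] at hv; exact (Finset.mem_filter.mp hv).2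
    -- neighbour choice
    have hnb' : ∀ v : V, ∃ u, v ∈ D → u ∈ m ∧ H.Adj v u := by
      intro v
      by_cases hv : v ∈ D
      · obtain ⟨u, hu, hadj⟩ := hmmax v (hDsubA hv) (hDnm v hv)
        exact ⟨u, fun _ => ⟨hu, hadj⟩⟩
      · exact ⟨Classical.arbitrary V, fun h => absurd h hv⟩
    choose nb hnb using hnb'
    have hnbne : ∀ v ∈ D, v ≠ nb v := fun v hv => (hnb v hv).2.ne
    -- the map φ from D to triangle classes
    set φ : V → Fin c := fun v =>
      if hv : v ∈ D then C ⟨s(Sum.inl v, Sum.inl (nb v)),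
        (hk_adj_ll (H := H) (k := k)).mpr (hnb v hv).2⟩ else Classical.arbitrary _ with hφ_def
    have hφD : ∀ v (hv : v ∈ D), φ v = C ⟨s(Sum.inl v, Sum.inl (nb v)),
        (hk_adj_ll (H := H) (k := k)).mpr (hnb v hv).2⟩ := by
      intro v hv; rw [hφ_def]; exact dif_pos hv
    have hφTC : ∀ v ∈ D, φ v ∈ TC := by
      intro v hv
      rw [hφD v hv]
      exact huncov _ (hA_mem.mp (hDsubA hv)) (hA_mem.mp (hmA (hnb v hv).1))
    have hφmem : ∀ v (hv : v ∈ D),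
        Sum.inl v ∈ tri (φ v) ∧ Sum.inl (nb v) ∈ tri (φ v) := by
      intro v hv
      have hTC' : φ v ∈ TC := hφTC v hv
      constructor
      · exact hmem_tri _ hTC' _ (hφD v hv).symm _ (by simp)
      · exact hmem_tri _ hTC' _ (hφD v hv).symm _ (by simp)
    have hφinj : Set.InjOn φ ↑D := by
      intro v1 h1 v2 h2 heq
      by_contra hne12
      have h1' : v1 ∈ D := h1
      have h2' : v2 ∈ D := h2
      have hT := hinl2 (φ v1) (hφTC _ h1')
      have m1 : Sum.inl v1 ∈ tri (φ v1) := (hφmem v1 h1').1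
      have m2 : Sum.inl v2 ∈ tri (φ v1) := by
        rw [heq]; exact (hφmem v2 h2').1
      have m3 : Sum.inl (nb v1) ∈ tri (φ v1) := (hφmem v1 h1').2
      have hnbv2 : nb v1 ≠ v2 := by
        intro h; exact hDnm v2 h2' (h ▸ (hnb v1 h1').1)
      have hnbv1 : nb v1 ≠ v1 := (hnbne v1 h1').symm
      have hsub3 : ({Sum.inl v1, Sum.inl v2, Sum.inl (nb v1)} :
          Finset (V ⊕ Fin k × Fin 3)) ⊆ (tri (φ v1)).filter (fun w => w.isLeft) := by
        intro w hw
        simp only [Finset.mem_insert, Finset.mem_singleton] at hw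
        rcases hw with rfl | rfl | rfl <;> exact Finset.mem_filter.mpr ⟨by assumption, by simp⟩
      have hc3 : ({Sum.inl v1, Sum.inl v2, Sum.inl (nb v1)} :
          Finset (V ⊕ Fin k × Fin 3)).card = 3 := by
        rw [Finset.card_insert_of_notMem (by simp [hne12, hnbv1.symm]),
          Finset.card_insert_of_notMem (by simp [hnbv2.symm]),
          Finset.card_singleton]
      have := Finset.card_le_card hsub3
      omega
    have hDcard : D.card ≤ TC.card :=
      Finset.card_le_card_of_injOn φ (fun v hv => hφTC v hv) hφinj
    by_cases hB0 : B.card = 0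
    · omega
    -- B.card = 1
    have hB1 : B.card = 1 := by omega
    obtain ⟨p0, hBp0⟩ := Finset.card_eq_one.mp hB1
    have hp0B : p0 ∈ B := by rw [hBp0]; simp
    have hψTC : ∀ v ∈ A, C ⟨s(Sum.inl v, Sum.inr p0), hk_adj_lr (H := H) v p0⟩ ∈ TC :=
      fun v hv => huncov _ (hA_mem.mp hv) (hB_mem.mp hp0B)
    set ψ : V → Fin c := fun v => C ⟨s(Sum.inl v, Sum.inr p0), hk_adj_lr (H := H) v p0⟩
      with hψ_def
    set P : Finset (Fin c) := TC.filter (fun j => Sum.inr p0 ∈ tri j) with hP_def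
    have hPsubTC : P ⊆ TC := by rw [hP_def]; exact Finset.filter_subset _ _
    have hψP : ∀ v ∈ A, ψ v ∈ P := by
      intro v hv
      rw [hP_def]
      refine Finset.mem_filter.mpr ⟨hψTC v hv, ?_⟩
      exact hmem_tri _ (hψTC v hv) _ rfl _ (by simp)
    have hψfib : ∀ j ∈ P, (A.filter (fun v => ψ v = j)).card ≤ 2 := by
      intro j hj
      have hjTC : j ∈ TC := hPsubTC hj
      have hle : (A.filter (fun v => ψ v = j)).card ≤
          ((tri j).filter (fun w => w.isLeft)).card := by
        apply Finset.card_le_card_of_injOn (fun v => Sum.inl v)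
        · intro v hv
          rw [Finset.mem_coe, Finset.mem_filter] at hv
          refine Finset.mem_filter.mpr ⟨?_, by simp⟩
          exact hmem_tri _ hjTC _ hv.2 _ (by simp)
        · intro a _ b _ h
          exact Sum.inl.inj h
      have := hinl2 j hjTC
      omega
    have hAP : A.card ≤ 2 * P.card :=
      Finset.card_le_mul_card_image_of_maps_to (fun v hv => hψP v hv) 2 hψfib
    -- split D by whether φ lands in P
    set DP : Finset V := D.filter (fun v => φ v ∈ P) with hDP_def
    set Dout : Finset V := D.filter (fun v => φ v ∉ P) with hDout_def
    have hDsplit : DP.card + Dout.card = D.card := by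
      rw [hDP_def, hDout_def]
      exact Finset.card_filter_add_card_filter_not _
    have hDPsubD : DP ⊆ D := by rw [hDP_def]; exact Finset.filter_subset _ _
    have hDoutsubD : Dout ⊆ D := by rw [hDout_def]; exact Finset.filter_subset _ _
    have hDPP : DP.card ≤ P.card := by
      apply Finset.card_le_card_of_injOn φ
      · intro v hv; rw [hDP_def] at hv; exact (Finset.mem_filter.mp hv).2
      · exact hφinj.mono (by intro v hv; exact hDPsubD hv)
    have hTCPD : P.card + Dout.card ≤ TC.card := by
      have hdisj : Disjoint P (Dout.image φ) := by
        rw [Finset.disjoint_right]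
        intro j hj1 hj2
        obtain ⟨v, hv, rfl⟩ := Finset.mem_image.mp hj1
        rw [hDout_def] at hv
        exact (Finset.mem_filter.mp hv).2 hj2
      have hsub : P ∪ Dout.image φ ⊆ TC := by
        intro j hj
        rcases Finset.mem_union.mp hj with hj | hj
        · exact hPsubTC hj
        · obtain ⟨v, hv, rfl⟩ := Finset.mem_image.mp hj
          exact hφTC v (hDoutsubD hv)
      have himg : (Dout.image φ).card = Dout.card :=
        Finset.card_image_of_injOn (hφinj.mono (by intro v hv; exact hDoutsubD hv))
      have := Finset.card_le_card hsub
      rw [Finset.card_union_of_disjoint hdisj, himg] at this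
      exact this
    by_cases hTD : D.card + 1 ≤ TC.card
    · omega
    · push_neg at hTD
      have hTCD : TC.card = D.card := by omega
      have hPDP : P.card = DP.card := by omega
      have hsubU : P ∪ Dout.image φ ⊆ TC := by
        intro j hj
        rcases Finset.mem_union.mp hj with hj | hj
        · exact hPsubTC hj
        · obtain ⟨v, hv, rfl⟩ := Finset.mem_image.mp hj
          exact hφTC v (hDoutsubD hv)
      have hdisjU : Disjoint P (Dout.image φ) := by
        rw [Finset.disjoint_right]
        intro j hj1 hj2
        obtain ⟨v, hv, rfl⟩ := Finset.mem_image.mp hj1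
        rw [hDout_def] at hv
        exact (Finset.mem_filter.mp hv).2 hj2
      have himgout : (Dout.image φ).card = Dout.card :=
        Finset.card_image_of_injOn (hφinj.mono (by intro v hv; exact hDoutsubD hv))
      have hTCeq : P ∪ Dout.image φ = TC := by
        apply Finset.eq_of_subset_of_card_le hsubU
        rw [Finset.card_union_of_disjoint hdisjU, himgout]
        omega
      have hPeq : DP.image φ = P := by
        apply Finset.eq_of_subset_of_card_le
        · intro j hj
          obtain ⟨v, hv, rfl⟩ := Finset.mem_image.mp hj
          rw [hDP_def] at hv
          exact (Finset.mem_filter.mp hv).2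
        · rw [Finset.card_image_of_injOn (hφinj.mono
            (by intro v hv; exact hDPsubD hv))]
          omega
      -- structure of classes in P
      have hPstruct : ∀ j ∈ P, ∃ v, v ∈ DP ∧ φ v = j ∧
          tri j = {Sum.inl v, Sum.inl (nb v), Sum.inr p0} := by
        intro j hj
        rw [← hPeq] at hj
        obtain ⟨v, hvDP, rfl⟩ := Finset.mem_image.mp hj
        have hvD : v ∈ D := hDPsubD hvDP
        refine ⟨v, hvDP, rfl, ?_⟩
        symm
        apply Finset.eq_of_subset_of_card_le
        · intro w hw
          simp only [Finset.mem_insert, Finset.mem_singleton] at hw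
          rcases hw with rfl | rfl | rfl
          · exact (hφmem v hvD).1
          · exact (hφmem v hvD).2
          · have : φ v ∈ P := by rw [← hPeq]; exact hj
            rw [hP_def] at this
            exact (Finset.mem_filter.mp this).2
        · have hc3 : ({Sum.inl v, Sum.inl (nb v), Sum.inr p0} :
              Finset (V ⊕ Fin k × Fin 3)).card = 3 := by
            rw [Finset.card_insert_of_notMem (by
                simp [fun h => (hnbne v hvD) h]),
              Finset.card_insert_of_notMem (by simp),
              Finset.card_singleton]
          rw [hc3]
          exact htricard _
      -- every vertex of A is in some pair
      have hcover : ∀ h ∈ A, ∃ v, v ∈ DP ∧ (h = v ∨ h = nb v) := by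
        intro h hh
        obtain ⟨v, hvDP, hφv, htriv⟩ := hPstruct (ψ h) (hψP h hh)
        have hmem : Sum.inl h ∈ tri (ψ h) := hmem_tri _ (hψTC h hh) _ rfl _ (by simp)
        rw [htriv] at hmem
        simp only [Finset.mem_insert, Finset.mem_singleton] at hmem
        rcases hmem with h1 | h1 | h1
        · exact ⟨v, hvDP, Or.inl (Sum.inl.inj h1)⟩
        · exact ⟨v, hvDP, Or.inr (Sum.inl.inj h1)⟩
        · exact absurd h1 (by simp)
      -- every H-edge inside A is one of the pairs
      have hedge_pair : ∀ u w, H.Adj u w → u ∈ A → w ∈ A →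
          ∃ v, v ∈ D ∧ ((u = v ∧ w = nb v) ∨ (w = v ∧ u = nb v)) := by
        intro u w hadj huA hwA
        have hjTC : C ⟨s(Sum.inl u, Sum.inl w), (hk_adj_ll (H := H) (k := k)).mpr hadj⟩ ∈ TC :=
          huncov _ (hA_mem.mp huA) (hA_mem.mp hwA)
        have hjU : C ⟨s(Sum.inl u, Sum.inl w), (hk_adj_ll (H := H) (k := k)).mpr hadj⟩ ∈ P ∪ Dout.image φ := by
          rw [hTCeq]; exact hjTC
        obtain ⟨v, hvD, hvmem, hnbmem⟩ : ∃ v, v ∈ D ∧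
            Sum.inl v ∈ tri (C ⟨s(Sum.inl u, Sum.inl w), (hk_adj_ll (H := H) (k := k)).mpr hadj⟩) ∧
            Sum.inl (nb v) ∈ tri (C ⟨s(Sum.inl u, Sum.inl w), (hk_adj_ll (H := H) (k := k)).mpr hadj⟩) := by
          rcases Finset.mem_union.mp hjU with hj | hj
          · obtain ⟨v, hvDP, hφv, htriv⟩ := hPstruct _ hj
            refine ⟨v, hDPsubD hvDP, ?_, ?_⟩ <;> rw [htriv] <;> simp
          · obtain ⟨v, hvout, hφv⟩ := Finset.mem_image.mp hj
            have hvD : v ∈ D := hDoutsubD hvout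
            exact ⟨v, hvD, hφv ▸ (hφmem v hvD).1, hφv ▸ (hφmem v hvD).2⟩
        -- the left part of the triangle is exactly {inl v, inl (nb v)}
        have hLeq : ({Sum.inl v, Sum.inl (nb v)} : Finset (V ⊕ Fin k × Fin 3)) =
            (tri (C ⟨s(Sum.inl u, Sum.inl w), (hk_adj_ll (H := H) (k := k)).mpr hadj⟩)).filter
              (fun x => x.isLeft) := by
          apply Finset.eq_of_subset_of_card_le
          · intro x hx
            simp only [Finset.mem_insert, Finset.mem_singleton] at hx
            rcases hx with rfl | rfl <;> exact Finset.mem_filter.mpr ⟨by assumption, by simp⟩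
          · have h2 := hinl2 _ hjTC
            have hc2 : ({Sum.inl v, Sum.inl (nb v)} :
                Finset (V ⊕ Fin k × Fin 3)).card = 2 := by
              rw [Finset.card_insert_of_notMem (by
                  simp [fun h => (hnbne v hvD) h]),
                Finset.card_singleton]
            omega
        have hu' : Sum.inl u ∈ ({Sum.inl v, Sum.inl (nb v)} :
            Finset (V ⊕ Fin k × Fin 3)) := by
          rw [hLeq]
          exact Finset.mem_filter.mpr ⟨hmem_tri _ hjTC _ rfl _ (by simp), by simp⟩
        have hw' : Sum.inl w ∈ ({Sum.inl v, Sum.inl (nb v)} :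
            Finset (V ⊕ Fin k × Fin 3)) := by
          rw [hLeq]
          exact Finset.mem_filter.mpr ⟨hmem_tri _ hjTC _ rfl _ (by simp), by simp⟩
        simp only [Finset.mem_insert, Finset.mem_singleton] at hu' hw'
        rcases hu' with h1 | h1 <;> rcases hw' with h2 | h2
        · exact absurd ((Sum.inl.inj h1).trans (Sum.inl.inj h2).symm) hadj.ne
        · exact ⟨v, hvD, Or.inl ⟨Sum.inl.inj h1, Sum.inl.inj h2⟩⟩
        · exact ⟨v, hvD, Or.inr ⟨Sum.inl.inj h2, Sum.inl.inj h1⟩⟩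
        · exact absurd ((Sum.inl.inj h1).trans (Sum.inl.inj h2).symm) hadj.ne
      -- D is independent
      have hDind : ∀ u ∈ D, ∀ w ∈ D, ¬ H.Adj u w := by
        intro u hu w hw hadj
        obtain ⟨v, hvD, hc⟩ := hedge_pair u w hadj (hDsubA hu) (hDsubA hw)
        rcases hc with ⟨-, h2⟩ | ⟨-, h2⟩
        · exact hDnm w hw (h2 ▸ (hnb v hvD).1)
        · exact hDnm u hu (h2 ▸ (hnb v hvD).1)
      have hDα : D.card ≤ _root_.indepNum H := by
        have h := le_indepNum (H := H) (A := (↑D : Set V)) (by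
          intro u hu v hv
          exact hDind u (by simpa using hu) v (by simpa using hv))
        rwa [Set.ncard_coe_finset] at h
      -- m injects into DP via hcover
      have hmDP : m.card ≤ DP.card := by
        have hsubm : m ⊆ DP.image nb := by
          intro x hx
          obtain ⟨v, hvDP, hx'⟩ := hcover x (hmA hx)
          rcases hx' with rfl | rfl
          · exact absurd hx (hDnm x (hDPsubD hvDP))
          · exact Finset.mem_image_of_mem nb hvDP
        calc m.card ≤ (DP.image nb).card := Finset.card_le_card hsubm
          _ ≤ DP.card := Finset.card_image_le
      by_cases hmD : m.card < D.card
      · omega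
      · -- m.card = D.card : A is perfectly matched
        have hmDeq : m.card = D.card := by omega
        have hDPeqc : DP.card = D.card := by omega
        have hDPD : DP = D :=
          Finset.eq_of_subset_of_card_le hDPsubD (by omega)
        have hnbinj : Set.InjOn nb ↑D := by
          rw [← Finset.card_image_iff]
          have h1 : m ⊆ D.image nb := by
            rw [← hDPD]
            intro x hx
            obtain ⟨v, hvDP, hx'⟩ := hcover x (hmA hx)
            rcases hx' with rfl | rfl
            · exact absurd hx (hDnm x (hDPsubD hvDP))
            · exact Finset.mem_image_of_mem nb hvDP
          have h2 : (D.image nb).card ≤ D.card := Finset.card_image_le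
          have h3 : m.card ≤ (D.image nb).card := Finset.card_le_card h1
          omega
        have hpairdisj : ∀ v1 ∈ D, ∀ v2 ∈ D, ∀ x : V,
            (x = v1 ∨ x = nb v1) → (x = v2 ∨ x = nb v2) → v1 = v2 := by
          intro v1 h1 v2 h2 x hx1 hx2
          rcases hx1 with rfl | rfl <;> rcases hx2 with h | h
          · exact h
          · exact absurd ((h ▸ (hnb v2 h2).1)) (hDnm _ h1)
          · exact absurd ((h ▸ (hnb v1 h1).1)) (hDnm _ h2)
          · exact hnbinj h1 h2 h
        have hDne : D.Nonempty := Finset.card_pos.mp (by omega)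
        by_cases hAuniv : ∀ x : V, x ∈ A
        · -- H would be a perfect matching: contradiction with connectivity and hα
          exfalso
          obtain ⟨v1, hv1D⟩ := hDne
          have hADJ1 : H.Adj v1 (nb v1) := (hnb v1 hv1D).2
          have huniqnb : ∀ u w w', H.Adj u w → H.Adj u w' → w = w' := by
            intro u w w' hadj1 hadj2
            obtain ⟨x1, hx1D, hc1⟩ := hedge_pair u w hadj1 (hAuniv u) (hAuniv w)
            obtain ⟨x2, hx2D, hc2⟩ := hedge_pair u w' hadj2 (hAuniv u) (hAuniv w')
            have hx12 : x1 = x2 := by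
              apply hpairdisj x1 hx1D x2 hx2D u
              · rcases hc1 with ⟨h, -⟩ | ⟨-, h⟩
                · exact Or.inl h
                · exact Or.inr h
              · rcases hc2 with ⟨h, -⟩ | ⟨-, h⟩
                · exact Or.inl h
                · exact Or.inr h
            subst hx12
            have hne1 : x1 ≠ nb x1 := hnbne x1 hx1D
            rcases hc1 with ⟨hu1, hw1⟩ | ⟨hw1, hu1⟩ <;>
              rcases hc2 with ⟨hu2, hw2⟩ | ⟨hw2, hu2⟩
            · exact hw1.trans hw2.symm
            · exact absurd (hu1.symm.trans hu2) hne1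
            · exact absurd (hu2.symm.trans hu1) hne1
            · exact hw1.trans hw2.symm
          have hwalk : ∀ x : V, x = v1 ∨ x = nb v1 := by
            intro x
            obtain ⟨p⟩ := hconn.preconnected v1 x
            have hkey : ∀ (a b : V) (q : H.Walk a b),
                (a = v1 ∨ a = nb v1) → (b = v1 ∨ b = nb v1) := by
              intro a b q
              induction q with
              | nil => exact id
              | cons hadj q ih =>
                intro ha
                apply ih
                rcases ha with rfl | rfl
                · exact Or.inr (huniqnb _ _ _ hadj hADJ1)
                · exact Or.inl (huniqnb _ _ _ hadj hADJ1.symm)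
            exact hkey v1 x p (Or.inl rfl)
          have hα1 : _root_.indepNum H ≤ 1 := by
            obtain ⟨Aind, hind, hcard⟩ := exists_indep_card H
            rw [← hcard]
            by_contra hgt
            push_neg at hgt
            obtain ⟨x, y, hx, hy, hxy⟩ := (Set.one_lt_ncard_iff (Set.toFinite _)).mp hgt
            have hadjxy : H.Adj x y := by
              rcases hwalk x with rfl | rfl <;> rcases hwalk y with rfl | rfl
              · exact absurd rfl hxy
              · exact hADJ1
              · exact hADJ1.symm
              · exact absurd rfl hxy
            exact hind x hx y hy hadjxy
          omega
        · -- there is a vertex outside A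
          push_neg at hAuniv
          obtain ⟨v0, hv0A⟩ := hAuniv
          set r : V → V := fun v => if H.Adj v0 v then nb v else v with hr_def
          have hrpair : ∀ v, r v = v ∨ r v = nb v := by
            intro v
            by_cases hc : H.Adj v0 v
            · right; simp only [hr_def]; rw [if_pos hc]
            · left; simp only [hr_def]; rw [if_neg hc]
          have hrnadj : ∀ v ∈ D, ¬ H.Adj v0 (r v) := by
            intro v hvD hbad
            simp only [hr_def] at hbad
            by_cases hc : H.Adj v0 v
            · rw [if_pos hc] at hbad
              exact htf {v0, v, nb v}
                (SimpleGraph.is3Clique_triple_iff.mpr ⟨hc, hbad, (hnb v hvD).2⟩)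
            · rw [if_neg hc] at hbad
              exact hc hbad
          have hrA : ∀ v ∈ D, r v ∈ A := by
            intro v hvD
            rcases hrpair v with h | h <;> rw [h]
            · exact hDsubA hvD
            · exact hmA (hnb v hvD).1
          have hrinj : Set.InjOn r ↑D := by
            intro v1 h1 v2 h2 heq
            exact hpairdisj v1 h1 v2 h2 (r v1) (hrpair v1)
              (heq ▸ hrpair v2)
          have hv0nr : v0 ∉ D.image r := by
            intro hmem
            obtain ⟨v, hv, hrv⟩ := Finset.mem_image.mp hmem
            exact hv0A (hrv ▸ hrA v hv)
          have hindep : ∀ x ∈ insert v0 (D.image r), ∀ y ∈ insert v0 (D.image r),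
              ¬ H.Adj x y := by
            intro x hx y hy hadj
            rcases Finset.mem_insert.mp hx with rfl | hx <;>
              rcases Finset.mem_insert.mp hy with rfl | hy
            · exact H.irrefl hadj
            · obtain ⟨v, hv, rfl⟩ := Finset.mem_image.mp hy
              exact hrnadj v hv hadj
            · obtain ⟨v, hv, rfl⟩ := Finset.mem_image.mp hx
              exact hrnadj v hv hadj.symm
            · obtain ⟨w1, hw1, rfl⟩ := Finset.mem_image.mp hx
              obtain ⟨w2, hw2, rfl⟩ := Finset.mem_image.mp hy
              obtain ⟨v3, hv3D, hc3⟩ := hedge_pair (r w1) (r w2) hadj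
                (hrA w1 hw1) (hrA w2 hw2)
              have e1 : w1 = v3 := by
                apply hpairdisj w1 hw1 v3 hv3D (r w1) (hrpair w1)
                rcases hc3 with ⟨h, -⟩ | ⟨-, h⟩
                · exact Or.inl h
                · exact Or.inr h
              have e2 : w2 = v3 := by
                apply hpairdisj w2 hw2 v3 hv3D (r w2) (hrpair w2)
                rcases hc3 with ⟨-, h⟩ | ⟨h, -⟩
                · exact Or.inr h
                · exact Or.inl h
              rw [e1, ← e2] at hadj
              exact hadj.ne (congrArg r rfl)
          have hsize : (insert v0 (D.image r)).card = D.card + 1 := by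
            rw [Finset.card_insert_of_notMem hv0nr,
              Finset.card_image_of_injOn hrinj]
          have hDα1 : D.card + 1 ≤ _root_.indepNum H := by
            have h := le_indepNum (H := H) (A := (↑(insert v0 (D.image r)) : Set V)) (by
              intro u hu v hv
              exact hindep u (by simpa using hu) v (by simpa using hv))
            rw [Set.ncard_coe_finset, hsize] at h
            exact h
          omega

end Lower

/-- For a connected triangle-free graph `H` with at least one edge, the chromatic number of
the complement of the line graph of the join `Hk H k` of `H` with `k` disjoint triangles
equals the vertex cover number of `Hk H k` if and only if the independence number of `H`
is at least `2k`. -/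
theorem chromNum_KG_Hk_eq_tauN_iff {V : Type*} [Fintype V] (H : SimpleGraph V)
    (hconn : H.Connected) (htf : H.CliqueFree 3) (hE : H.edgeSet.Nonempty)
    (k : ℕ) (hk : 1 ≤ k) :
    chromNum (KG (Hk H k)) = tauN (Hk H k) ↔ 2 * k ≤ _root_.indepNum H := by
  classical
  haveI : Fintype ↥((Hk H k).edgeSet) := Fintype.ofFinite _
  have hχmem : (KG (Hk H k)).Colorable (chromNum (KG (Hk H k))) :=
    Nat.sInf_mem (s := {n | (KG (Hk H k)).Colorable n}) ⟨_, colorable_of_fintype (KG (Hk H k))⟩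
  have hχle : chromNum (KG (Hk H k)) ≤ Fintype.card V + k :=
    chromNum_le (colorable_KG_Hk H k)
  obtain ⟨S₀, hS₀cov, hS₀card⟩ := exists_cover_card (Hk H k)
  have hχτ : chromNum (KG (Hk H k)) ≤ tauN (Hk H k) := by
    rw [← hS₀card]
    exact chromNum_le (colorable_KG_of_cover _ hS₀cov)
  constructor
  · intro heq
    by_contra hlt
    push_neg at hlt
    rcases cover_lower hS₀cov with h | h <;> omega
  · intro hge
    have h1 := tau_upper H k
    have h2 := chrom_lower hconn htf hk hge hχmem
    omega
end
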